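/- arXiv:1803.09444 — 6 statements merged into one kernel-verified Lean document; each statement's English description precedes it below -/
import Mathlib

section
/- (Convolution property of the Meixner distribution, Lemma 2.1(b).) For every α > 0, β ∈ (−π, π), d₁, d₂ > 0 and m₁, m₂ ∈ ℝ, the convolution of two Meixner densities with common scaling and skewness parameters is again a Meixner density: for all x ∈ ℝ, ∫_ℝ f(x − y; α, β, d₁, m₁) · f(y; α, β, d₂, m₂) dy = f(x; α, β, d₁ + d₂, m₁ + m₂). Consequently, if X₁ and X₂ are independent random variables with densities f(·; α, β, d₁, m₁) and f(·; α, β, d₂, m₂), then X₁ + X₂ has density f(·; α, β, d₁ + d₂, m₁ + m₂). -/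
open MeasureTheory Real Set

/-- The Meixner probability density with scaling parameter `α`, skewness parameter `β`,
peakedness parameter `d` and location parameter `m`. -/
noncomputable def meixnerDensity (α β d m : ℝ) (x : ℝ) : ℝ :=
  (2 * Real.cos (β / 2)) ^ (2 * d) / (2 * Real.pi * α * Real.Gamma (2 * d)) *
    Real.exp (β * (x - m) / α) *
    ‖Complex.Gamma ((d : ℂ) + Complex.I * (((x - m) / α : ℝ) : ℂ))‖ ^ 2

open Complex FourierTransform



noncomputable def mxG (d t : ℝ) : ℝ := Real.exp (d * t) / (1 + Real.exp t) ^ (2 * d)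

noncomputable def mxGc (d t : ℝ) : ℂ := (mxG d t : ℂ)

noncomputable def mxH (d y : ℝ) : ℂ :=
  Complex.Gamma (d + Complex.I * y) * Complex.Gamma (d - Complex.I * y)

lemma mxG_nonneg (d t : ℝ) : 0 ≤ mxG d t := by
  unfold mxG; positivity

lemma one_add_exp_pos (t : ℝ) : (0:ℝ) < 1 + Real.exp t := by positivity

lemma mxG_mul (d₁ d₂ t : ℝ) : mxG d₁ t * mxG d₂ t = mxG (d₁ + d₂) t := by
  unfold mxG
  rw [div_mul_div_comm, ← Real.exp_add, ← Real.rpow_add (one_add_exp_pos t)]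
  ring_nf

lemma mxG_even (d t : ℝ) : mxG d (-t) = mxG d t := by
  unfold mxG
  have key : (1 + Real.exp (-t)) ^ (2*d) = Real.exp (-(2*d)*t) * (1 + Real.exp t) ^ (2*d) := by
    have h1 : 1 + Real.exp (-t) = Real.exp (-t) * (1 + Real.exp t) := by
      rw [mul_add, mul_one, ← Real.exp_add, neg_add_cancel, Real.exp_zero, add_comm]
    rw [h1, Real.mul_rpow (Real.exp_pos _).le (one_add_exp_pos t).le, ← Real.exp_mul]
    ring_nf
  rw [key, div_eq_div_iff (by positivity) (by positivity), ← mul_assoc, ← Real.exp_add]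
  ring_nf

lemma mxG_le (d : ℝ) (hd : 0 < d) (t : ℝ) : mxG d t ≤ Real.exp (-(d * |t|)) := by
  unfold mxG
  have h1 : Real.exp (max 0 t) ≤ 1 + Real.exp t := by
    rcases le_total t 0 with h | h
    · rw [max_eq_left h]; simpa using (Real.exp_pos t).le
    · rw [max_eq_right h]; linarith
  have h2 : Real.exp (2 * d * max 0 t) ≤ (1 + Real.exp t) ^ (2 * d) := by
    calc Real.exp (2 * d * max 0 t) = Real.exp (max 0 t) ^ (2*d) := by
          rw [← Real.exp_mul]; ring_nf
      _ ≤ (1 + Real.exp t) ^ (2 * d) :=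
          Real.rpow_le_rpow (Real.exp_pos _).le h1 (by positivity)
  calc Real.exp (d*t) / (1 + Real.exp t) ^ (2*d) ≤ Real.exp (d*t) / Real.exp (2 * d * max 0 t) :=
        div_le_div_of_nonneg_left (Real.exp_pos _).le (Real.exp_pos _) h2
    _ = Real.exp (d * t - 2 * d * max 0 t) := by rw [Real.exp_sub]
    _ = Real.exp (-(d * |t|)) := by
        congr 1
        rcases le_total t 0 with h | h
        · rw [max_eq_left h, abs_of_nonpos h]; ring
        · rw [max_eq_right h, _root_.abs_of_nonneg h]; ring

lemma integrable_exp_neg_abs (d : ℝ) (hd : 0 < d) :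
    Integrable (fun t : ℝ => Real.exp (-(d * |t|))) := by
  have h1 : IntegrableOn (fun t : ℝ => Real.exp (-(d * |t|))) (Ici 0) := by
    rw [integrableOn_Ici_iff_integrableOn_Ioi]
    exact (exp_neg_integrableOn_Ioi 0 hd).congr_fun
      (fun t ht => by rw [_root_.abs_of_nonneg (le_of_lt ht)]; ring_nf) measurableSet_Ioi
  have h2 : IntegrableOn (fun t : ℝ => Real.exp (-(d * |t|))) (Iio 0) := by
    have h3 := (MeasurePreserving.integrableOn_comp_preimage
      (Measure.measurePreserving_neg (volume : Measure ℝ))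
      (Homeomorph.neg ℝ).measurableEmbedding).2 h1
    have h4 : (fun t : ℝ => Real.exp (-(d * |t|))) ∘ (Neg.neg : ℝ → ℝ)
        = fun t : ℝ => Real.exp (-(d * |t|)) := by
      funext t; simp [Function.comp, abs_neg]
    have h5 : (Neg.neg : ℝ → ℝ) ⁻¹' (Ici 0) = Iic 0 := by
      ext t; simp
    rw [h4, h5] at h3
    exact h3.mono_set Iio_subset_Iic_self
  have := h2.union h1
  rwa [Iio_union_Ici, integrableOn_univ] at this

lemma continuous_mxG (d : ℝ) : Continuous (mxG d) := by
  unfold mxG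
  apply Continuous.div (by fun_prop)
  · exact (continuous_const.add Real.continuous_exp).rpow_const
      (fun t => Or.inl (one_add_exp_pos t).ne')
  · exact fun t => (Real.rpow_pos_of_pos (one_add_exp_pos t) _).ne'

lemma integrable_mxG (d : ℝ) (hd : 0 < d) : Integrable (mxG d) := by
  refine (integrable_exp_neg_abs d hd).mono ((continuous_mxG d).aestronglyMeasurable) ?_
  filter_upwards with t
  rw [Real.norm_eq_abs, Real.norm_eq_abs, _root_.abs_of_nonneg (mxG_nonneg d t),
    _root_.abs_of_nonneg (Real.exp_pos _).le]
  exact mxG_le d hd t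

lemma integrable_mxGc (d : ℝ) (hd : 0 < d) : Integrable (mxGc d) :=
  (integrable_mxG d hd).ofReal

lemma continuous_mxGc (d : ℝ) : Continuous (mxGc d) :=
  Complex.continuous_ofReal.comp (continuous_mxG d)


lemma norm_cGamma_le (z : ℂ) (hz : 0 < z.re) : ‖Complex.Gamma z‖ ≤ Real.Gamma z.re := by
  rw [Complex.Gamma_eq_integral hz, Real.Gamma_eq_integral hz, Complex.GammaIntegral]
  refine (norm_integral_le_integral_norm _).trans (le_of_eq ?_)
  apply setIntegral_congr_fun measurableSet_Ioi
  intro x hx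
  simp only [norm_mul, Complex.norm_real, Real.norm_eq_abs,
    Complex.norm_cpow_eq_rpow_re_of_pos hx, Complex.sub_re, Complex.one_re,
    _root_.abs_of_nonneg (Real.exp_pos (-x)).le]

lemma mxH_conj (d y : ℝ) (hd : 0 < d) :
    mxH d y = ((‖Complex.Gamma ((d:ℂ) + Complex.I * y)‖)^2 : ℝ) := by
  unfold mxH
  have h1 : (d:ℂ) - Complex.I * y = (starRingEnd ℂ) ((d:ℂ) + Complex.I * y) := by
    simp [Complex.ext_iff]
  rw [h1, Complex.Gamma_conj, Complex.mul_conj]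
  rw [Complex.sq_norm]

lemma mxH_even (d y : ℝ) : mxH d (-y) = mxH d y := by
  unfold mxH
  rw [mul_comm]
  push_cast
  ring_nf

lemma continuous_cGamma_line (d : ℝ) (hd : 0 < d) :
    Continuous (fun y : ℝ => Complex.Gamma ((d:ℂ) + Complex.I * y)) := by
  rw [continuous_iff_continuousAt]
  intro y
  have h1 : ∀ m : ℕ, (d:ℂ) + Complex.I * y ≠ -m := by
    intro m h
    have := congrArg Complex.re h
    simp at this
    linarith [this, Nat.cast_nonneg (α := ℝ) m]
  show ContinuousAt (Complex.Gamma ∘ (fun y : ℝ => (d:ℂ) + Complex.I * y)) y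
  exact ContinuousAt.comp (Complex.differentiableAt_Gamma _ h1).continuousAt
    (Continuous.continuousAt (by fun_prop))

lemma continuous_mxH (d : ℝ) (hd : 0 < d) : Continuous (mxH d) := by
  unfold mxH
  refine (continuous_cGamma_line d hd).mul ?_
  have h := (continuous_cGamma_line d hd).comp continuous_neg
  have h2 : (fun y : ℝ => Complex.Gamma ((d:ℂ) - Complex.I * y))
      = (fun y : ℝ => Complex.Gamma ((d:ℂ) + Complex.I * y)) ∘ (fun y : ℝ => -y) := by
    funext y
    simp only [Function.comp_apply]
    congr 1
    push_cast
    ring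
  rw [h2]
  exact h

lemma norm_mxH_le (d : ℝ) (hd : 0 < d) (y : ℝ) :
    ‖mxH d y‖ ≤ (Real.Gamma (d+1))^2 / (d^2 + y^2) := by
  have hz : ((d:ℂ) + Complex.I * y) ≠ 0 := by
    intro h; have := congrArg Complex.re h; simp at this; linarith
  have habs : ∀ y' : ℝ, ‖Complex.Gamma ((d:ℂ) + Complex.I * y')‖
      ≤ Real.Gamma (d+1) / Real.sqrt (d^2 + y'^2) := by
    intro y'
    have hz' : ((d:ℂ) + Complex.I * y') ≠ 0 := by
      intro h; have := congrArg Complex.re h; simp at this; linarith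
    have key := Complex.Gamma_add_one _ hz'
    have h2 : Complex.Gamma ((d:ℂ) + Complex.I * y')
        = Complex.Gamma ((d:ℂ) + Complex.I * y' + 1) / ((d:ℂ) + Complex.I * y') := by
      rw [key]; field_simp
    rw [h2, norm_div]
    have h3 : ‖(d:ℂ) + Complex.I * y'‖ = Real.sqrt (d^2 + y'^2) := by
      rw [Complex.norm_def, Complex.normSq_apply]
      simp
      ring_nf
    rw [h3]
    apply div_le_div_of_nonneg_right ?x ?y |>.trans_eq rfl
    case y => positivity
    case x =>
      have := norm_cGamma_le ((d:ℂ) + Complex.I * y' + 1) (by simp; linarith)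
      simpa using this
  calc ‖mxH d y‖ = ‖Complex.Gamma ((d:ℂ) + Complex.I * y)‖
        * ‖Complex.Gamma ((d:ℂ) - Complex.I * y)‖ := by rw [mxH, norm_mul]
    _ ≤ (Real.Gamma (d+1) / Real.sqrt (d^2+y^2)) * (Real.Gamma (d+1) / Real.sqrt (d^2+y^2)) := by
        apply mul_le_mul (habs y) ?_ (norm_nonneg _) (by positivity)
        have := habs (-y)
        have he : (d:ℂ) + Complex.I * (-y:ℝ) = (d:ℂ) - Complex.I * y := by push_cast; ring
        rw [he] at this
        simpa using this
    _ = (Real.Gamma (d+1))^2 / (d^2 + y^2) := by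
        rw [div_mul_div_comm, ← pow_two, ← pow_two, Real.sq_sqrt (by positivity)]

lemma integrable_mxH (d : ℝ) (hd : 0 < d) : Integrable (mxH d) := by
  have hb : Integrable (fun y : ℝ => (Real.Gamma (d+1))^2 / (d^2 + y^2)) := by
    have h0 : Integrable (fun y : ℝ => (1 + y^2)⁻¹) := integrable_inv_one_add_sq
    have h1 : Integrable (fun y : ℝ => (1 + (y/d)^2)⁻¹) := h0.comp_div hd.ne'
    have h2 := (h1.const_mul ((Real.Gamma (d+1))^2 / d^2))
    apply h2.congr
    filter_upwards with y
    field_simp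
  refine hb.mono' ((continuous_mxH d hd).aestronglyMeasurable) ?_
  filter_upwards with y
  exact norm_mxH_le d hd y


noncomputable def mxSig (t : ℝ) : ℝ := Real.exp t / (1 + Real.exp t)

lemma mxSig_mem (t : ℝ) : mxSig t ∈ Ioo (0:ℝ) 1 := by
  constructor
  · unfold mxSig; positivity
  · unfold mxSig
    rw [div_lt_one (one_add_exp_pos t)]
    linarith

lemma mxSig_image : mxSig '' univ = Ioo (0:ℝ) 1 := by
  apply Subset.antisymm
  · rintro u ⟨t, -, rfl⟩
    exact mxSig_mem t
  · rintro u ⟨hu0, hu1⟩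
    have h1 : (0:ℝ) < 1 - u := by linarith
    refine ⟨Real.log (u / (1 - u)), mem_univ _, ?_⟩
    unfold mxSig
    rw [Real.exp_log (by positivity)]
    field_simp
    ring

lemma mxSig_hasDerivAt (t : ℝ) :
    HasDerivAt mxSig (Real.exp t / (1 + Real.exp t)^2) t := by
  have h := (Real.hasDerivAt_exp t).div
    ((hasDerivAt_const t (1:ℝ)).add (Real.hasDerivAt_exp t)) (one_add_exp_pos t).ne'
  refine h.congr_deriv ?_
  simp only [Pi.add_apply, zero_add]
  ring

lemma mxSig_strictMono : StrictMono mxSig := by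
  have hrepr : ∀ t, mxSig t = 1 - (1 + Real.exp t)⁻¹ := by
    intro t
    unfold mxSig
    field_simp
    ring
  intro s t h
  rw [hrepr, hrepr]
  have h2 : (1 + Real.exp s) < (1 + Real.exp t) := by
    linarith [Real.exp_lt_exp.mpr h]
  have h3 : (1 + Real.exp t)⁻¹ < (1 + Real.exp s)⁻¹ :=
    (inv_lt_inv₀ (by positivity) (by positivity)).mpr h2
  linarith

lemma fourier_mxGc (d : ℝ) (hd : 0 < d) (ξ : ℝ) :
    𝓕 (mxGc d) ξ = mxH d (2 * π * ξ) / (Real.Gamma (2*d) : ℂ) := by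
  set a : ℂ := (d:ℂ) - (2*π*ξ : ℝ) * Complex.I with ha_def
  set b : ℂ := (d:ℂ) + (2*π*ξ : ℝ) * Complex.I with hb_def
  have ha : 0 < a.re := by simp [ha_def]; exact hd
  have hb : 0 < b.re := by simp [hb_def]; exact hd
  have hab : a + b = ((2*d : ℝ) : ℂ) := by push_cast [ha_def, hb_def]; ring
  -- Step 1: the Fourier integral equals the beta integral
  have key : 𝓕 (mxGc d) ξ = Complex.betaIntegral a b := by
    rw [Complex.betaIntegral, intervalIntegral.integral_of_le zero_le_one,
      integral_Ioc_eq_integral_Ioo, ← mxSig_image]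
    have hderiv : ∀ t ∈ (univ : Set ℝ), HasDerivWithinAt mxSig
        (Real.exp t / (1 + Real.exp t)^2) univ t :=
      fun t _ => (mxSig_hasDerivAt t).hasDerivWithinAt
    rw [integral_image_eq_integral_abs_deriv_smul MeasurableSet.univ hderiv
      (mxSig_strictMono.injective.injOn)]
    rw [setIntegral_univ]
    rw [Real.fourier_real_eq_integral_exp_smul]
    apply MeasureTheory.integral_congr_ae
    filter_upwards with t
    -- pointwise identity
    have hu := mxSig_mem t
    set u := mxSig t with hu_def
    have hu0 : (0:ℝ) < u := hu.1
    have hu1 : u < 1 := hu.2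
    set L := Real.log (1 + Real.exp t) with hL_def
    have hlogu : Real.log u = t - L := by
      rw [hu_def]
      unfold mxSig
      rw [Real.log_div (Real.exp_ne_zero t) (one_add_exp_pos t).ne', Real.log_exp]
    have hlog1u : Real.log (1 - u) = -L := by
      have h1u : (1:ℝ) - u = (1 + Real.exp t)⁻¹ := by
        rw [hu_def]; unfold mxSig; field_simp; ring
      rw [h1u, Real.log_inv]
    have habs : |Real.exp t / (1 + Real.exp t)^2| = Real.exp t / (1 + Real.exp t)^2 := by
      rw [_root_.abs_of_nonneg]; positivity
    have hsig : Real.exp t / (1 + Real.exp t)^2 = Real.exp (t - 2*L) := by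
      have hL2 : Real.exp (2*L) = (1 + Real.exp t)^2 := by
        rw [two_mul, Real.exp_add, hL_def, Real.exp_log (one_add_exp_pos t)]
        ring
      rw [Real.exp_sub, hL2]
    have hne1 : ((u:ℝ):ℂ) ≠ 0 := by exact_mod_cast hu0.ne'
    have h1upos : (0:ℝ) < 1 - u := by linarith
    have hne2 : ((1-u:ℝ):ℂ) ≠ 0 := by exact_mod_cast h1upos.ne'
    have h1u' : ((1:ℂ) - (u:ℂ)) = ((1 - u : ℝ) : ℂ) := by push_cast; ring
    simp only [Complex.real_smul, Circle.smul_def]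
    rw [habs, hsig, h1u', Complex.cpow_def_of_ne_zero hne1, Complex.cpow_def_of_ne_zero hne2,
      ← Complex.ofReal_log hu0.le, ← Complex.ofReal_log h1upos.le, hlogu, hlog1u]
    rw [Complex.ofReal_exp, ← Complex.exp_add, ← Complex.exp_add]
    unfold mxGc mxG
    rw [Real.rpow_def_of_pos (one_add_exp_pos t), ← hL_def, ← Real.exp_sub,
      Complex.ofReal_exp, smul_eq_mul, ← Complex.exp_add]
    congr 1
    rw [ha_def, hb_def]
    push_cast
    ring
  -- Step 2: identify the beta integral with the Gamma quotient
  have hg := Complex.Gamma_mul_Gamma_eq_betaIntegral ha hb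
  rw [hab, Complex.Gamma_ofReal] at hg
  have hΓ : ((Real.Gamma (2*d) : ℝ) : ℂ) ≠ 0 := by
    exact_mod_cast (Real.Gamma_pos_of_pos (by linarith : (0:ℝ) < 2*d)).ne'
  rw [key, eq_div_iff hΓ, mul_comm, ← hg]
  unfold mxH
  rw [mul_comm]
  congr 2
  · rw [hb_def]; push_cast; ring
  · rw [ha_def]; push_cast; ring


lemma integrable_fourier_mxGc (d : ℝ) (hd : 0 < d) : Integrable (𝓕 (mxGc d)) := by
  have h : 𝓕 (mxGc d) = fun ξ => mxH d (2*π*ξ) / (Real.Gamma (2*d) : ℂ) :=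
    funext (fourier_mxGc d hd)
  rw [h]
  exact ((integrable_mxH d hd).comp_mul_left' (by positivity : (2*π:ℝ) ≠ 0)).div_const _

lemma fourier_fourier_mxGc (d : ℝ) (hd : 0 < d) (t : ℝ) :
    𝓕 (𝓕 (mxGc d)) t = mxGc d t := by
  have hinv := (continuous_mxGc d).fourierInv_fourier_eq (integrable_mxGc d hd)
    (integrable_fourier_mxGc d hd)
  have h1 : 𝓕 (𝓕 (mxGc d)) t = 𝓕⁻ (𝓕 (mxGc d)) (-t) := by
    rw [Real.fourierInv_eq_fourier_neg, neg_neg]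
  rw [h1, hinv]
  show ((mxG d (-t) : ℝ) : ℂ) = ((mxG d t : ℝ) : ℂ)
  rw [mxG_even]

lemma flip_innerl : (innerₗ ℝ).flip = innerₗ ℝ := by
  apply LinearMap.ext; intro x; apply LinearMap.ext; intro y
  exact real_inner_comm x y

lemma mxH_conv (d₁ d₂ : ℝ) (hd₁ : 0 < d₁) (hd₂ : 0 < d₂) (w : ℝ) :
    ∫ v : ℝ, mxH d₁ (w - v) * mxH d₂ v
      = ((2 * π * Real.Gamma (2*d₁) * Real.Gamma (2*d₂) / Real.Gamma (2*(d₁+d₂)) : ℝ) : ℂ)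
          * mxH (d₁+d₂) w := by
  have hπ : (2*π : ℝ) ≠ 0 := by positivity
  set s : ℝ := w / (2*π) with hs_def
  have hws : 2*π*s = w := by rw [hs_def]; field_simp
  set D := d₁ + d₂ with hD_def
  have hD : 0 < D := by positivity
  -- modulated function
  set Gm : ℝ → ℂ := fun t => Complex.exp ((2*π*t*s : ℝ) * Complex.I) * mxGc d₁ t with hGm_def
  have hGm_int : Integrable Gm := by
    apply (integrable_mxGc d₁ hd₁).bdd_mul (c := 1)
    · exact (Complex.continuous_exp.comp (by fun_prop)).aestronglyMeasurable
    · filter_upwards with t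
      rw [Complex.norm_exp_ofReal_mul_I]
  have hGm_fourier : ∀ ξ : ℝ, 𝓕 Gm ξ = 𝓕 (mxGc d₁) (ξ - s) := by
    intro ξ
    rw [Real.fourier_real_eq_integral_exp_smul,
      Real.fourier_real_eq_integral_exp_smul]
    apply MeasureTheory.integral_congr_ae
    filter_upwards with t
    rw [hGm_def]
    simp only [smul_eq_mul]
    rw [← mul_assoc, ← Complex.exp_add]
    congr 2
    push_cast
    ring
  -- the central Parseval-type step
  have key : (∫ ξ : ℝ, 𝓕 (mxGc d₁) (s - ξ) * 𝓕 (mxGc d₂) ξ) = 𝓕 (mxGc D) (-s) := by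
    have even𝓕 : ∀ ξ : ℝ, 𝓕 (mxGc d₁) (s - ξ) = 𝓕 Gm ξ := by
      intro ξ
      rw [hGm_fourier ξ, fourier_mxGc d₁ hd₁, fourier_mxGc d₁ hd₁]
      have : 2*π*(s - ξ) = -(2*π*(ξ - s)) := by ring
      rw [this, mxH_even]
    calc (∫ ξ : ℝ, 𝓕 (mxGc d₁) (s - ξ) * 𝓕 (mxGc d₂) ξ)
        = ∫ ξ : ℝ, 𝓕 Gm ξ • 𝓕 (mxGc d₂) ξ := by
          apply MeasureTheory.integral_congr_ae
          filter_upwards with ξ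
          rw [even𝓕 ξ, smul_eq_mul]
      _ = ∫ t : ℝ, Gm t • 𝓕 (𝓕 (mxGc d₂)) t := by
          have h := VectorFourier.integral_fourierIntegral_smul_eq_flip
            (e := Real.fourierChar) (L := innerₗ ℝ) (μ := volume) (ν := volume)
            Real.continuous_fourierChar continuous_inner hGm_int
            (integrable_fourier_mxGc d₂ hd₂)
          rw [flip_innerl] at h
          exact h
      _ = ∫ t : ℝ, Complex.exp ((2*π*t*s : ℝ) * Complex.I) * mxGc D t := by
          apply MeasureTheory.integral_congr_ae
          filter_upwards with t
          rw [fourier_fourier_mxGc d₂ hd₂, smul_eq_mul, hGm_def]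
          show Complex.exp _ * mxGc d₁ t * mxGc d₂ t = _
          rw [mul_assoc]
          congr 1
          show ((mxG d₁ t : ℝ) : ℂ) * ((mxG d₂ t : ℝ) : ℂ) = _
          rw [← Complex.ofReal_mul, mxG_mul]
          rfl
      _ = 𝓕 (mxGc D) (-s) := by
          rw [Real.fourier_real_eq_integral_exp_smul]
          apply MeasureTheory.integral_congr_ae
          filter_upwards with t
          rw [smul_eq_mul]
          congr 2
          push_cast
          ring
  -- change of variables v = 2 π ξ
  have hcov := MeasureTheory.Measure.integral_comp_mul_left
    (fun v : ℝ => mxH d₁ (w - v) * mxH d₂ v) (2*π)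
  have hstep : (∫ v : ℝ, mxH d₁ (w - v) * mxH d₂ v)
      = (2*π : ℝ) • ∫ ξ : ℝ, mxH d₁ (w - 2*π*ξ) * mxH d₂ (2*π*ξ) := by
    rw [hcov, smul_smul]
    rw [abs_of_pos (by positivity : (0:ℝ) < (2*π)⁻¹)]
    rw [mul_inv_cancel₀ hπ, one_smul]
  rw [hstep]
  have hΓ₁ : ∀ ξ : ℝ, mxH d₁ (w - 2*π*ξ) * mxH d₂ (2*π*ξ)
      = ((Real.Gamma (2*d₁) * Real.Gamma (2*d₂) : ℝ) : ℂ)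
        * (𝓕 (mxGc d₁) (s - ξ) * 𝓕 (mxGc d₂) ξ) := by
    intro ξ
    rw [fourier_mxGc d₁ hd₁, fourier_mxGc d₂ hd₂]
    have h1 : 2*π*(s - ξ) = w - 2*π*ξ := by rw [mul_sub, hws]
    rw [h1]
    have hg1 : ((Real.Gamma (2*d₁) : ℝ) : ℂ) ≠ 0 := by
      exact_mod_cast (Real.Gamma_pos_of_pos (by linarith : (0:ℝ) < 2*d₁)).ne'
    have hg2 : ((Real.Gamma (2*d₂) : ℝ) : ℂ) ≠ 0 := by
      exact_mod_cast (Real.Gamma_pos_of_pos (by linarith : (0:ℝ) < 2*d₂)).ne'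
    push_cast
    field_simp
  calc (2*π : ℝ) • ∫ ξ : ℝ, mxH d₁ (w - 2*π*ξ) * mxH d₂ (2*π*ξ)
      = (2*π : ℝ) • (((Real.Gamma (2*d₁) * Real.Gamma (2*d₂) : ℝ) : ℂ)
          * ∫ ξ : ℝ, 𝓕 (mxGc d₁) (s - ξ) * 𝓕 (mxGc d₂) ξ) := by
        rw [← MeasureTheory.integral_const_mul]
        congr 1
        exact MeasureTheory.integral_congr_ae (Filter.Eventually.of_forall hΓ₁)
    _ = ((2 * π * Real.Gamma (2*d₁) * Real.Gamma (2*d₂) / Real.Gamma (2*(d₁+d₂)) : ℝ) : ℂ)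
          * mxH (d₁+d₂) w := by
        rw [key, fourier_mxGc D hD]
        have h2 : 2*π*(-s) = -w := by rw [mul_neg, hws]
        rw [h2, mxH_even]
        have hgD : ((Real.Gamma (2*D) : ℝ) : ℂ) ≠ 0 := by
          exact_mod_cast (Real.Gamma_pos_of_pos (by linarith : (0:ℝ) < 2*D)).ne'
        rw [← hD_def, Complex.real_smul]
        push_cast
        field_simp


noncomputable def mxHR (d y : ℝ) : ℝ :=
  ‖Complex.Gamma ((d : ℂ) + Complex.I * y)‖ ^ 2

lemma mxHR_ofReal (d y : ℝ) (hd : 0 < d) : ((mxHR d y : ℝ) : ℂ) = mxH d y :=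
  (mxH_conj d y hd).symm

lemma mxHR_nonneg (d y : ℝ) : 0 ≤ mxHR d y := by unfold mxHR; positivity

lemma continuous_mxHR (d : ℝ) (hd : 0 < d) : Continuous (mxHR d) :=
  (continuous_norm.comp (continuous_cGamma_line d hd)).pow 2

lemma integrable_mxH_conv (d₁ d₂ : ℝ) (hd₁ : 0 < d₁) (hd₂ : 0 < d₂) (w : ℝ) :
    Integrable (fun v : ℝ => mxH d₁ (w - v) * mxH d₂ v) := by
  apply (integrable_mxH d₂ hd₂).bdd_mul (c := (Real.Gamma (d₁+1))^2 / d₁^2)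
  · exact ((continuous_mxH d₁ hd₁).comp (continuous_const.sub continuous_id)).aestronglyMeasurable
  · filter_upwards with v
    refine (norm_mxH_le d₁ hd₁ (w - v)).trans ?_
    apply div_le_div_of_nonneg_left (by positivity) (by positivity)
    nlinarith [sq_nonneg (w - v)]

lemma integrable_mxHR_conv (d₁ d₂ : ℝ) (hd₁ : 0 < d₁) (hd₂ : 0 < d₂) (w : ℝ) :
    Integrable (fun v : ℝ => mxHR d₁ (w - v) * mxHR d₂ v) := by
  have h := (integrable_mxH_conv d₁ d₂ hd₁ hd₂ w).norm
  apply h.congr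
  filter_upwards with v
  rw [norm_mul,
    ← mxHR_ofReal d₁ _ hd₁, ← mxHR_ofReal d₂ _ hd₂, Complex.norm_real, Complex.norm_real,
    Real.norm_eq_abs, Real.norm_eq_abs,
    _root_.abs_of_nonneg (mxHR_nonneg _ _), _root_.abs_of_nonneg (mxHR_nonneg _ _)]

lemma mxHR_conv (d₁ d₂ : ℝ) (hd₁ : 0 < d₁) (hd₂ : 0 < d₂) (w : ℝ) :
    ∫ v : ℝ, mxHR d₁ (w - v) * mxHR d₂ v
      = (2 * π * Real.Gamma (2*d₁) * Real.Gamma (2*d₂) / Real.Gamma (2*(d₁+d₂)))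
          * mxHR (d₁+d₂) w := by
  apply Complex.ofReal_injective
  have hcoe : ((∫ v : ℝ, mxHR d₁ (w - v) * mxHR d₂ v : ℝ) : ℂ)
      = ∫ v : ℝ, ((mxHR d₁ (w - v) * mxHR d₂ v : ℝ) : ℂ) :=
    (integral_ofReal (f := fun v : ℝ => mxHR d₁ (w - v) * mxHR d₂ v) (𝕜 := ℂ)).symm
  rw [hcoe]
  have heq : ∀ v : ℝ, ((mxHR d₁ (w - v) * mxHR d₂ v : ℝ) : ℂ) = mxH d₁ (w - v) * mxH d₂ v := by
    intro v
    rw [Complex.ofReal_mul, mxHR_ofReal d₁ _ hd₁, mxHR_ofReal d₂ _ hd₂]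
  rw [MeasureTheory.integral_congr_ae (Filter.Eventually.of_forall heq), mxH_conv d₁ d₂ hd₁ hd₂ w,
    Complex.ofReal_mul, mxHR_ofReal _ _ (by positivity)]

section Meixner

variable {α β d₁ d₂ m₁ m₂ : ℝ} (hα : 0 < α) (hβ : β ∈ Set.Ioo (-Real.pi) Real.pi)
  (hd₁ : 0 < d₁) (hd₂ : 0 < d₂)

lemma meixner_eq (d m x : ℝ) : meixnerDensity α β d m x
    = (2 * Real.cos (β / 2)) ^ (2 * d) / (2 * π * α * Real.Gamma (2 * d)) *
      Real.exp (β * (x - m) / α) * mxHR d ((x - m)/α) := rfl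

include hβ in
lemma cosβ_pos : 0 < 2 * Real.cos (β / 2) := by
  have h := Real.cos_pos_of_mem_Ioo (show β/2 ∈ Ioo (-(π/2)) (π/2) by
    constructor <;> [linarith [hβ.1]; linarith [hβ.2]])
  linarith

include hα hβ hd₁ hd₂ in
lemma meixner_prod_repr (x y : ℝ) :
    meixnerDensity α β d₁ m₁ (x - y) * meixnerDensity α β d₂ m₂ y
      = ((2 * Real.cos (β / 2)) ^ (2 * d₁) / (2 * π * α * Real.Gamma (2 * d₁))
          * ((2 * Real.cos (β / 2)) ^ (2 * d₂) / (2 * π * α * Real.Gamma (2 * d₂)))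
          * Real.exp (β * (x - m₁ - m₂) / α))
        * (mxHR d₁ ((x - m₁ - m₂)/α - (y - m₂)/α) * mxHR d₂ ((y - m₂)/α)) := by
  rw [meixner_eq, meixner_eq]
  have h1 : (x - y - m₁)/α = (x - m₁ - m₂)/α - (y - m₂)/α := by
    field_simp
    ring
  have h2 : Real.exp (β * (x - y - m₁) / α) * Real.exp (β * (y - m₂) / α)
      = Real.exp (β * (x - m₁ - m₂) / α) := by
    rw [← Real.exp_add]
    congr 1
    field_simp
    ring
  rw [h1]
  calc _ = ((2 * Real.cos (β / 2)) ^ (2 * d₁) / (2 * π * α * Real.Gamma (2 * d₁))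
          * ((2 * Real.cos (β / 2)) ^ (2 * d₂) / (2 * π * α * Real.Gamma (2 * d₂)))
          * (Real.exp (β * (x - y - m₁) / α) * Real.exp (β * (y - m₂) / α)))
        * (mxHR d₁ ((x - m₁ - m₂)/α - (y - m₂)/α) * mxHR d₂ ((y - m₂)/α)) := by ring
    _ = _ := by rw [h2]

include hα hβ hd₁ hd₂ in
lemma integrable_meixner_prod (x : ℝ) :
    Integrable (fun y => meixnerDensity α β d₁ m₁ (x - y) * meixnerDensity α β d₂ m₂ y) := by
  have hrepr := fun y => meixner_prod_repr hα hβ hd₁ hd₂ (m₁ := m₁) (m₂ := m₂) x y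
  set w := (x - m₁ - m₂)/α with hw
  set F : ℝ → ℝ := fun v => mxHR d₁ (w - v) * mxHR d₂ v with hF
  have hFint : Integrable F := integrable_mxHR_conv d₁ d₂ hd₁ hd₂ w
  have h1 : Integrable fun z : ℝ => F (z/α) := hFint.comp_div hα.ne'
  have h2 : Integrable fun y : ℝ => F ((y - m₂)/α) := by
    have h3 := h1.comp_add_right (-m₂)
    apply h3.congr
    filter_upwards with y
    rw [sub_eq_add_neg]
  have h4 := h2.const_mul ((2 * Real.cos (β / 2)) ^ (2 * d₁) / (2 * π * α * Real.Gamma (2 * d₁))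
          * ((2 * Real.cos (β / 2)) ^ (2 * d₂) / (2 * π * α * Real.Gamma (2 * d₂)))
          * Real.exp (β * (x - m₁ - m₂) / α))
  apply h4.congr
  filter_upwards with y
  rw [hrepr y]

include hα hβ hd₁ hd₂ in
lemma meixner_conv (x : ℝ) :
    (∫ y : ℝ, meixnerDensity α β d₁ m₁ (x - y) * meixnerDensity α β d₂ m₂ y)
      = meixnerDensity α β (d₁+d₂) (m₁+m₂) x := by
  set w := (x - m₁ - m₂)/α with hw
  set F : ℝ → ℝ := fun v => mxHR d₁ (w - v) * mxHR d₂ v with hF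
  have hrw : (∫ y : ℝ, meixnerDensity α β d₁ m₁ (x - y) * meixnerDensity α β d₂ m₂ y)
      = ((2 * Real.cos (β / 2)) ^ (2 * d₁) / (2 * π * α * Real.Gamma (2 * d₁))
          * ((2 * Real.cos (β / 2)) ^ (2 * d₂) / (2 * π * α * Real.Gamma (2 * d₂)))
          * Real.exp (β * (x - m₁ - m₂) / α)) * ∫ y : ℝ, F ((y - m₂)/α) := by
    rw [← MeasureTheory.integral_const_mul]
    exact MeasureTheory.integral_congr_ae
      (Filter.Eventually.of_forall (fun y => meixner_prod_repr hα hβ hd₁ hd₂ x y))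
  rw [hrw]
  have hsub : (∫ y : ℝ, F ((y - m₂)/α)) = α * ∫ v, F v := by
    calc (∫ y : ℝ, F ((y - m₂)/α)) = ∫ y : ℝ, (fun z => F (z/α)) (y + -m₂) := by
          apply MeasureTheory.integral_congr_ae
          filter_upwards with y
          rw [sub_eq_add_neg]
      _ = ∫ z : ℝ, F (z/α) := MeasureTheory.integral_add_right_eq_self (μ := volume) (fun z => F (z/α)) (-m₂)
      _ = α * ∫ v, F v := by
          rw [MeasureTheory.Measure.integral_comp_div F α, abs_of_pos hα, smul_eq_mul]
  rw [hsub, hF]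
  rw [mxHR_conv d₁ d₂ hd₁ hd₂ w]
  rw [meixner_eq]
  have hxw : (x - (m₁ + m₂))/α = w := by rw [hw]; ring_nf
  have hxw2 : β * (x - (m₁ + m₂)) / α = β * (x - m₁ - m₂) / α := by ring_nf
  rw [hxw, hxw2]
  have hc : 0 < 2 * Real.cos (β / 2) := cosβ_pos hβ
  have hrpow : (2 * Real.cos (β / 2)) ^ (2 * (d₁ + d₂))
      = (2 * Real.cos (β / 2)) ^ (2 * d₁) * (2 * Real.cos (β / 2)) ^ (2 * d₂) := by
    rw [show 2 * (d₁ + d₂) = 2*d₁ + 2*d₂ by ring, Real.rpow_add hc]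
  rw [hrpow]
  have hg1 : (0:ℝ) < Real.Gamma (2*d₁) := Real.Gamma_pos_of_pos (by linarith)
  have hg2 : (0:ℝ) < Real.Gamma (2*d₂) := Real.Gamma_pos_of_pos (by linarith)
  have hgD : (0:ℝ) < Real.Gamma (2*(d₁+d₂)) := Real.Gamma_pos_of_pos (by linarith)
  have hπ : (0:ℝ) < π := Real.pi_pos
  field_simp

end Meixner


lemma conv_withDensity (F G : ℝ → ENNReal) (hF : Measurable F) (hG : Measurable G) :
    Measure.map (fun p : ℝ × ℝ => p.1 + p.2)
        ((volume.withDensity F).prod (volume.withDensity G))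
      = volume.withDensity (fun x => ∫⁻ y, F (x - y) * G y) := by
  have hadd : Measurable (fun p : ℝ × ℝ => p.1 + p.2) := measurable_fst.add measurable_snd
  ext s hs
  set ind : ℝ → ENNReal := s.indicator (fun _ => (1:ENNReal)) with hind_def
  have hI : Measurable ind := measurable_const.indicator hs
  have hsec : ∀ x : ℝ, MeasurableSet {y : ℝ | x + y ∈ s} :=
    fun x => (measurable_const.add measurable_id) hs
  have hGind : ∀ x : ℝ, (volume.withDensity G) {y : ℝ | x + y ∈ s}
      = ∫⁻ y, G y * ind (x + y) := by
    intro x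
    rw [withDensity_apply _ (hsec x), ← lintegral_indicator (hsec x)]
    apply lintegral_congr
    intro y
    by_cases hy : x + y ∈ s
    · rw [Set.indicator_of_mem (by exact hy : y ∈ {y : ℝ | x + y ∈ s}),
        hind_def, Set.indicator_of_mem hy, mul_one]
    · rw [Set.indicator_of_notMem (by exact hy : y ∉ {y : ℝ | x + y ∈ s}),
        hind_def, Set.indicator_of_notMem hy, mul_zero]
  have hGi_meas : Measurable (fun x : ℝ => ∫⁻ y, G y * ind (x + y)) := by
    apply Measurable.lintegral_prod_right (f := fun (x : ℝ) (y : ℝ) => G y * ind (x + y))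
    exact (hG.comp measurable_snd).mul (hI.comp hadd)
  calc (Measure.map (fun p : ℝ × ℝ => p.1 + p.2)
        ((volume.withDensity F).prod (volume.withDensity G))) s
      = ((volume.withDensity F).prod (volume.withDensity G))
          ((fun p : ℝ × ℝ => p.1 + p.2) ⁻¹' s) := Measure.map_apply hadd hs
    _ = ∫⁻ x, (volume.withDensity G) {y : ℝ | x + y ∈ s} ∂(volume.withDensity F) := by
        rw [Measure.prod_apply (hadd hs)]; rfl
    _ = ∫⁻ x, (fun x => ∫⁻ y, G y * ind (x + y)) x ∂(volume.withDensity F) :=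
        lintegral_congr hGind
    _ = ∫⁻ x, F x * ∫⁻ y, G y * ind (x + y) := by
        rw [lintegral_withDensity_eq_lintegral_mul volume hF hGi_meas]; rfl
    _ = ∫⁻ x, ∫⁻ y, F x * (G y * ind (x + y)) := by
        apply lintegral_congr
        intro x
        rw [lintegral_const_mul (F x) (show Measurable fun y : ℝ => G y * ind (x + y) by fun_prop)]
    _ = ∫⁻ y, ∫⁻ x, F x * (G y * ind (x + y)) := by
        apply lintegral_lintegral_swap
        apply Measurable.aemeasurable
        exact (hF.comp measurable_fst).mul
          ((hG.comp measurable_snd).mul (hI.comp hadd))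
    _ = ∫⁻ y, ∫⁻ x, F (x - y) * (G y * ind x) := by
        apply lintegral_congr
        intro y
        have h := lintegral_add_right_eq_self (μ := volume)
          (fun x => F (x - y) * (G y * ind x)) y
        rw [← h]
        apply lintegral_congr
        intro x
        rw [add_sub_cancel_right]
    _ = ∫⁻ x, ∫⁻ y, F (x - y) * (G y * ind x) := by
        symm
        apply lintegral_lintegral_swap
        apply Measurable.aemeasurable
        exact ((hF.comp (measurable_fst.sub measurable_snd)).mul
          ((hG.comp measurable_snd).mul (hI.comp measurable_fst)))
    _ = ∫⁻ x, ind x * ∫⁻ y, F (x - y) * G y := by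
        apply lintegral_congr
        intro x
        rw [← lintegral_const_mul (ind x)
          (show Measurable fun y : ℝ => F (x - y) * G y by fun_prop)]
        apply lintegral_congr
        intro y
        ring
    _ = ∫⁻ x, s.indicator (fun x => ∫⁻ y, F (x - y) * G y) x := by
        apply lintegral_congr
        intro x
        by_cases hx : x ∈ s
        · rw [Set.indicator_of_mem hx, hind_def, Set.indicator_of_mem hx, one_mul]
        · rw [Set.indicator_of_notMem hx, hind_def, Set.indicator_of_notMem hx, zero_mul]
    _ = ∫⁻ x in s, ∫⁻ y, F (x - y) * G y := lintegral_indicator hs _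
    _ = (volume.withDensity (fun x => ∫⁻ y, F (x - y) * G y)) s :=
        (withDensity_apply _ hs).symm

section Final

variable {α β d₁ d₂ m₁ m₂ : ℝ}

lemma continuous_meixner {α β m : ℝ} {d : ℝ} (hα : 0 < α) (hd : 0 < d) :
    Continuous (meixnerDensity α β d m) := by
  have hrepr : meixnerDensity α β d m
      = fun x => (2 * Real.cos (β / 2)) ^ (2 * d) / (2 * π * α * Real.Gamma (2 * d)) *
        Real.exp (β * (x - m) / α) * mxHR d ((x - m)/α) := rfl
  rw [hrepr]
  exact ((continuous_const.mul (Real.continuous_exp.comp (by fun_prop))).mul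
    ((continuous_mxHR d hd).comp (by fun_prop)))

lemma meixner_nonneg {α β m : ℝ} {d : ℝ} (hα : 0 < α) (hβ : β ∈ Set.Ioo (-Real.pi) Real.pi)
    (hd : 0 < d) (x : ℝ) : 0 ≤ meixnerDensity α β d m x := by
  have hc : 0 < 2 * Real.cos (β / 2) := cosβ_pos hβ
  have hΓ : 0 < Real.Gamma (2*d) := Real.Gamma_pos_of_pos (by linarith)
  rw [meixner_eq]
  apply mul_nonneg (mul_nonneg (div_nonneg (Real.rpow_nonneg hc.le _) ?_) (Real.exp_pos _).le)
    (mxHR_nonneg _ _)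
  have hπ : (0:ℝ) < π := Real.pi_pos
  positivity

/-- Convolution property of the Meixner distribution (Lemma 2.1 (b)): Meixner densities
with common scaling and skewness parameters convolve to a Meixner density, and the sum of
independent Meixner random variables is again Meixner. -/
theorem meixnerDensity_convolution (α β d₁ d₂ m₁ m₂ : ℝ) (hα : 0 < α)
    (hβ : β ∈ Set.Ioo (-Real.pi) Real.pi) (hd₁ : 0 < d₁) (hd₂ : 0 < d₂) :
    (∀ x : ℝ, (∫ y : ℝ, meixnerDensity α β d₁ m₁ (x - y) * meixnerDensity α β d₂ m₂ y)
        = meixnerDensity α β (d₁ + d₂) (m₁ + m₂) x) ∧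
      ∀ {Ω : Type} [MeasurableSpace Ω] (μ : Measure Ω) [IsProbabilityMeasure μ]
        (X₁ X₂ : Ω → ℝ), Measurable X₁ → Measurable X₂ →
        ProbabilityTheory.IndepFun X₁ X₂ μ →
        μ.map X₁ = volume.withDensity (fun x => ENNReal.ofReal (meixnerDensity α β d₁ m₁ x)) →
        μ.map X₂ = volume.withDensity (fun x => ENNReal.ofReal (meixnerDensity α β d₂ m₂ x)) →
        μ.map (fun ω => X₁ ω + X₂ ω)
          = volume.withDensity
              (fun x => ENNReal.ofReal (meixnerDensity α β (d₁ + d₂) (m₁ + m₂) x)) := by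
  constructor
  · exact fun x => meixner_conv hα hβ hd₁ hd₂ x
  · intro Ω _ μ _ X₁ X₂ hX₁ hX₂ hindep h₁ h₂
    have hF₁ : Measurable (fun x => ENNReal.ofReal (meixnerDensity α β d₁ m₁ x)) :=
      ENNReal.measurable_ofReal.comp (continuous_meixner hα hd₁).measurable
    have hF₂ : Measurable (fun x => ENNReal.ofReal (meixnerDensity α β d₂ m₂ x)) :=
      ENNReal.measurable_ofReal.comp (continuous_meixner hα hd₂).measurable
    have hpair := (ProbabilityTheory.indepFun_iff_map_prod_eq_prod_map_map
      hX₁.aemeasurable hX₂.aemeasurable).mp hindep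
    have hmm : μ.map (fun ω => X₁ ω + X₂ ω)
        = Measure.map (fun p : ℝ × ℝ => p.1 + p.2) (μ.map (fun ω => (X₁ ω, X₂ ω))) := by
      rw [Measure.map_map (g := fun p : ℝ × ℝ => p.1 + p.2) (measurable_fst.add measurable_snd) (hX₁.prodMk hX₂)]
      rfl
    rw [hmm, hpair, h₁, h₂, conv_withDensity _ _ hF₁ hF₂]
    congr 1
    funext x
    have h5 : ∀ y : ℝ, ENNReal.ofReal (meixnerDensity α β d₁ m₁ (x - y))
        * ENNReal.ofReal (meixnerDensity α β d₂ m₂ y)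
        = ENNReal.ofReal (meixnerDensity α β d₁ m₁ (x - y) * meixnerDensity α β d₂ m₂ y) :=
      fun y => (ENNReal.ofReal_mul (meixner_nonneg hα hβ hd₁ _)).symm
    rw [lintegral_congr h5,
      ← MeasureTheory.ofReal_integral_eq_lintegral_ofReal
        (integrable_meixner_prod hα hβ hd₁ hd₂ x)
        (Filter.Eventually.of_forall (fun y =>
          mul_nonneg (meixner_nonneg hα hβ hd₁ _) (meixner_nonneg hα hβ hd₂ _))),
      meixner_conv hα hβ hd₁ hd₂ x]

end Final
end

section
/- For every α > 0, β ∈ (−π, π) and δ > 0, the function z ↦ min(1, z²) · δ e^{β z / α} / (z · sinh(π z / α)) is Lebesgue-integrable on ℝ \ {0}; i.e. the Meixner Lévy density k satisfies ∫_{ℝ\{0}} (1 ∧ z²) k(z) dz < ∞, so that k(z) dz defines a Lévy measure. -/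
open MeasureTheory Real Set

noncomputable def meixnerLevyDensity (α β δ : ℝ) (z : ℝ) : ℝ :=
  δ * Real.exp (β * z / α) / (z * Real.sinh (Real.pi * z / α))

lemma meixner_meas (α β δ : ℝ) :
    Measurable (fun z : ℝ => min 1 (z ^ 2) * meixnerLevyDensity α β δ z) := by
  unfold meixnerLevyDensity
  fun_prop

lemma meixner_aux_pos (α β δ : ℝ) (hα : 0 < α) (hβ : β < Real.pi) (hδ : 0 < δ) :
    IntegrableOn (fun z : ℝ => min 1 (z ^ 2) * meixnerLevyDensity α β δ z) (Ioi 0) := by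
  have hπ := Real.pi_pos
  rw [← Ioc_union_Ioi_eq_Ioi (zero_le_one)]
  apply IntegrableOn.union
  · -- on (0,1]
    apply Integrable.mono' (integrable_const (δ * Real.exp (|β| / α) * (α / Real.pi)))
      ((meixner_meas α β δ).aestronglyMeasurable.restrict)
    rw [ae_restrict_iff' measurableSet_Ioc]
    filter_upwards with z hz
    obtain ⟨hz0, hz1⟩ := hz
    have hSpos : 0 < Real.sinh (Real.pi * z / α) := Real.sinh_pos_iff.mpr (by positivity)
    have hk : 0 ≤ meixnerLevyDensity α β δ z := by
      unfold meixnerLevyDensity; positivity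
    rw [Real.norm_eq_abs, abs_of_nonneg (by positivity)]
    have h1 : min 1 (z ^ 2) * meixnerLevyDensity α β δ z
        ≤ z ^ 2 * meixnerLevyDensity α β δ z :=
      mul_le_mul_of_nonneg_right (min_le_right _ _) hk
    have h2 : z ^ 2 * meixnerLevyDensity α β δ z
        = δ * Real.exp (β * z / α) * (z / Real.sinh (Real.pi * z / α)) := by
      unfold meixnerLevyDensity
      field_simp
    have hE : Real.exp (β * z / α) ≤ Real.exp (|β| / α) := by
      apply Real.exp_le_exp.mpr
      apply div_le_div_of_nonneg_right ?_ hα.le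
      calc β * z ≤ |β| * z := mul_le_mul_of_nonneg_right (le_abs_self β) hz0.le
        _ ≤ |β| * 1 := mul_le_mul_of_nonneg_left hz1 (abs_nonneg β)
        _ = |β| := mul_one _
    have hzS : z / Real.sinh (Real.pi * z / α) ≤ α / Real.pi := by
      have hS : Real.pi * z / α ≤ Real.sinh (Real.pi * z / α) :=
        (Real.self_lt_sinh_iff.mpr (by positivity)).le
      calc z / Real.sinh (Real.pi * z / α) ≤ z / (Real.pi * z / α) :=
            div_le_div_of_nonneg_left hz0.le (by positivity) hS
        _ = α / Real.pi := by field_simp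
    calc min 1 (z ^ 2) * meixnerLevyDensity α β δ z
        ≤ δ * Real.exp (β * z / α) * (z / Real.sinh (Real.pi * z / α)) := h1.trans h2.le
      _ ≤ δ * Real.exp (|β| / α) * (α / Real.pi) := by
          gcongr
  · -- on (1, ∞)
    set c : ℝ := Real.exp (-(2 * Real.pi / α)) with hc
    have hc1 : c < 1 := by
      rw [hc, Real.exp_lt_one_iff]
      have : 0 < 2 * Real.pi / α := by positivity
      linarith
    have hc0 : 0 < c := Real.exp_pos _
    have hb : 0 < (Real.pi - β) / α := div_pos (by linarith) hα
    have hg : IntegrableOn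
        (fun z : ℝ => 2 * δ / (1 - c) * Real.exp (-((Real.pi - β) / α) * z)) (Ioi 1) :=
      (exp_neg_integrableOn_Ioi 1 hb).const_mul _
    apply Integrable.mono' hg (meixner_meas α β δ).aestronglyMeasurable.restrict
    rw [ae_restrict_iff' measurableSet_Ioi]
    filter_upwards with z hz
    have hz1 : (1:ℝ) < z := hz
    have hz0 : (0:ℝ) < z := by linarith
    have hSpos : 0 < Real.sinh (Real.pi * z / α) := Real.sinh_pos_iff.mpr (by positivity)
    have hmin : min 1 (z ^ 2) = 1 := min_eq_left (by nlinarith)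
    rw [Real.norm_eq_abs, abs_of_nonneg (by
      have : 0 ≤ meixnerLevyDensity α β δ z := by unfold meixnerLevyDensity; positivity
      positivity), hmin, one_mul]
    have hSge : Real.exp (Real.pi * z / α) * (1 - c) / 2 ≤ z * Real.sinh (Real.pi * z / α) := by
      have hE : Real.exp (-(Real.pi * z / α)) = Real.exp (Real.pi * z / α) * Real.exp (-(2 * Real.pi * z / α)) := by
        rw [← Real.exp_add]; ring_nf
      have hE2 : Real.exp (-(2 * Real.pi * z / α)) ≤ c := by
        rw [hc, Real.exp_le_exp, neg_le_neg_iff]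
        calc 2 * Real.pi / α = 2 * Real.pi * 1 / α := by ring
          _ ≤ 2 * Real.pi * z / α := by gcongr
      have hS : Real.exp (Real.pi * z / α) * (1 - c) / 2 ≤ Real.sinh (Real.pi * z / α) := by
        rw [Real.sinh_eq]
        have := mul_le_mul_of_nonneg_left hE2 (Real.exp_pos (Real.pi * z / α)).le
        rw [hE]
        linarith
      calc Real.exp (Real.pi * z / α) * (1 - c) / 2 ≤ Real.sinh (Real.pi * z / α) := hS
        _ = 1 * Real.sinh (Real.pi * z / α) := (one_mul _).symm
        _ ≤ z * Real.sinh (Real.pi * z / α) := mul_le_mul_of_nonneg_right hz1.le hSpos.le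
    have hd0 : 0 < Real.exp (Real.pi * z / α) * (1 - c) / 2 := by
      have h1c : 0 < 1 - c := by linarith
      positivity
    calc meixnerLevyDensity α β δ z
        = δ * Real.exp (β * z / α) / (z * Real.sinh (Real.pi * z / α)) := rfl
      _ ≤ δ * Real.exp (β * z / α) / (Real.exp (Real.pi * z / α) * (1 - c) / 2) :=
          div_le_div_of_nonneg_left (by positivity) hd0 hSge
      _ = 2 * δ / (1 - c) * Real.exp (-((Real.pi - β) / α) * z) := by
          rw [show -((Real.pi - β) / α) * z = β * z / α - Real.pi * z / α by ring,
            Real.exp_sub]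
          field_simp

/-- The Meixner Lévy density integrates `1 ∧ z²` over `ℝ \ {0}`, hence defines a
Lévy measure. -/
theorem meixnerLevyDensity_levyMeasure (α β δ : ℝ) (hα : 0 < α)
    (hβ : β ∈ Set.Ioo (-Real.pi) Real.pi) (hδ : 0 < δ) :
    IntegrableOn (fun z : ℝ => min 1 (z ^ 2) * meixnerLevyDensity α β δ z) {0}ᶜ := by
  obtain ⟨hβ1, hβ2⟩ := hβ
  rw [show ({0}ᶜ : Set ℝ) = Iio 0 ∪ Ioi 0 from (Iio_union_Ioi).symm]
  apply IntegrableOn.union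
  · -- negative side via z ↦ -z
    have h_map : ((volume : Measure ℝ).restrict (Ioi 0)).map Neg.neg
        = (volume : Measure ℝ).restrict (Iio 0) := by
      conv_rhs => rw [← Measure.map_neg_eq_self (volume : Measure ℝ),
        measurableEmbedding_neg.restrict_map]
      congr 1
      ext x
      simp
    rw [IntegrableOn, ← h_map, measurableEmbedding_neg.integrable_map_iff]
    have hfun : ((fun z : ℝ => min 1 (z ^ 2) * meixnerLevyDensity α β δ z) ∘ Neg.neg)
        = fun z : ℝ => min 1 (z ^ 2) * meixnerLevyDensity α (-β) δ z := by
      funext z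
      simp only [Function.comp_apply, meixnerLevyDensity]
      rw [show ((-z)^2 : ℝ) = z ^ 2 by ring, show β * -z / α = -β * z / α by ring, show Real.pi * -z / α = -(Real.pi * z / α) by ring,
        Real.sinh_neg]
      ring_nf
    rw [hfun]
    exact meixner_aux_pos α (-β) δ hα (by linarith) hδ
  · exact meixner_aux_pos α β δ hα hβ2 hδ
end

section
/- For every α > 0, β ∈ (−π, π) and δ > 0, the function z ↦ |z| · δ e^{β z / α} / (z · sinh(π z / α)) = δ e^{β z/α}/|sinh(π z/α)| is NOT Lebesgue-integrable on ℝ \ {0}; i.e. the Meixner Lévy density k satisfies ∫_{ℝ\{0}} |z| k(z) dz = ∞ (the associated Meixner–Lévy process has infinite variation). -/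
open MeasureTheory Real Set

lemma sinh_le_mul_exp {y : ℝ} (hy : 0 ≤ y) : Real.sinh y ≤ y * Real.exp y := by
  have h1 : (-y) + 1 ≤ Real.exp (-y) := Real.add_one_le_exp _
  have h2 : Real.exp (-y) * Real.exp y = 1 := by rw [← Real.exp_add]; simp
  have h3 : (0:ℝ) < Real.exp y := Real.exp_pos y
  have h4 : (1:ℝ) ≤ Real.exp y := Real.one_le_exp hy
  rw [Real.sinh_eq]
  nlinarith [mul_le_mul_of_nonneg_right h1 h3.le]

/-- The Meixner Lévy density does not integrate `|z|` over `ℝ \ {0}`: the associated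
Meixner–Lévy process has infinite variation. -/
theorem meixnerLevyDensity_infinite_variation (α β δ : ℝ) (hα : 0 < α)
    (hβ : β ∈ Set.Ioo (-Real.pi) Real.pi) (hδ : 0 < δ) :
    ¬ IntegrableOn (fun z : ℝ => |z| * meixnerLevyDensity α β δ z) {0}ᶜ := by
  intro h
  have hπ : (0:ℝ) < Real.pi := Real.pi_pos
  set c : ℝ := δ * Real.exp (-(|β| / α)) * α / (Real.pi * Real.exp (Real.pi / α)) with hc
  have hcpos : 0 < c := by
    apply div_pos (by positivity) (by positivity)
  have h1 : IntegrableOn (fun z : ℝ => |z| * meixnerLevyDensity α β δ z) (Ioo 0 1) := by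
    apply h.mono_set
    intro z hz
    exact fun hz0 => by simp at hz0; exact hz.1.ne' hz0
  -- lower bound
  have hbound : ∀ z ∈ Ioo (0:ℝ) 1, ‖c * z⁻¹‖ ≤ |z| * meixnerLevyDensity α β δ z := by
    intro z hz
    obtain ⟨hz0, hz1⟩ := hz
    have hsz : 0 < Real.sinh (Real.pi * z / α) := Real.sinh_pos_iff.2 (by positivity)
    have hzabs : |z| = z := abs_of_pos hz0
    have hkey : c * z⁻¹ ≤ |z| * meixnerLevyDensity α β δ z := by
      rw [hzabs, meixnerLevyDensity]
      rw [mul_div_assoc'] at *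
      have : z * (δ * Real.exp (β * z / α)) / (z * Real.sinh (Real.pi * z / α))
          = δ * Real.exp (β * z / α) / Real.sinh (Real.pi * z / α) := by
        rw [mul_div_mul_left _ _ hz0.ne']
      rw [this, ← div_eq_mul_inv, div_le_div_iff₀ hz0 hsz]
      -- goal : c * sinh (π z / α) ≤ δ * exp (β z / α) * z  (roughly)
      have hs : Real.sinh (Real.pi * z / α) ≤ (Real.pi * z / α) * Real.exp (Real.pi / α) := by
        calc Real.sinh (Real.pi * z / α) ≤ (Real.pi * z / α) * Real.exp (Real.pi * z / α) :=
              sinh_le_mul_exp (by positivity)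
          _ ≤ (Real.pi * z / α) * Real.exp (Real.pi / α) := by
              apply mul_le_mul_of_nonneg_left _ (by positivity)
              apply Real.exp_le_exp.2
              rw [div_le_div_iff₀ hα hα]
              nlinarith [mul_pos hπ hα]
      have hexp : Real.exp (-(|β| / α)) ≤ Real.exp (β * z / α) := by
        apply Real.exp_le_exp.2
        rw [← neg_div, div_le_div_iff₀ hα hα]
        have h5 : -|β| ≤ β * z := by
          have : -|β| * z ≤ β * z := mul_le_mul_of_nonneg_right (neg_abs_le β) hz0.le
          nlinarith [abs_nonneg β]
        nlinarith
      have hcs : c * Real.sinh (Real.pi * z / α)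
          ≤ c * ((Real.pi * z / α) * Real.exp (Real.pi / α)) :=
        mul_le_mul_of_nonneg_left hs hcpos.le
      have hceq : c * ((Real.pi * z / α) * Real.exp (Real.pi / α))
          = δ * Real.exp (-(|β| / α)) * z := by
        rw [hc]; field_simp
      calc c * Real.sinh (Real.pi * z / α) ≤ δ * Real.exp (-(|β| / α)) * z := by
            rw [← hceq]; exact hcs
        _ ≤ δ * Real.exp (β * z / α) * z := by
            apply mul_le_mul_of_nonneg_right _ hz0.le
            exact mul_le_mul_of_nonneg_left hexp hδ.le
        _ = δ * Real.exp (β * z / α) * z := rfl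
    calc ‖c * z⁻¹‖ = c * z⁻¹ := by
          rw [Real.norm_eq_abs, abs_of_pos (by positivity)]
      _ ≤ _ := hkey
  have h2 : IntegrableOn (fun z : ℝ => c * z⁻¹) (Ioo 0 1) := by
    apply Integrable.mono' h1
    · exact (measurable_const.mul measurable_inv).aestronglyMeasurable
    · rw [ae_restrict_iff' measurableSet_Ioo]
      filter_upwards with z hz using hbound z hz
  have h3 : IntegrableOn (fun z : ℝ => z⁻¹) (Ioo 0 1) := by
    have := h2.const_mul c⁻¹
    simpa [IntegrableOn, ← mul_assoc, inv_mul_cancel₀ hcpos.ne'] using this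
  have h4 : IntegrableOn (fun z : ℝ => z ^ (-1 : ℝ)) (Ioo (0:ℝ) 1) := by
    apply h3.congr_fun _ measurableSet_Ioo
    intro z hz
    simp [Real.rpow_neg hz.1.le]
  rw [intervalIntegral.integrableOn_Ioo_rpow_iff zero_lt_one] at h4
  exact lt_irrefl _ h4
end

section
/- (Novikov condition for the structure preserving measure change.) Let α > 0, δ > 0 and β, β* ∈ (−π, π), and set h(z) := ((β* − β)/α) · z. Then the function z ↦ (1 − e^{h(z)} + h(z) e^{h(z)}) · δ e^{β z/α} / (z · sinh(π z/α)) is Lebesgue-integrable on ℝ \ {0}, i.e. ∫_{ℝ\{0}} [1 − e^{h(z)} + h(z) e^{h(z)}] k(z) dz < ∞ where k is the Meixner Lévy density with parameters (α, β, δ). -/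
open MeasureTheory Real Set

lemma novikov_A_nonneg (t : ℝ) : 0 ≤ 1 - Real.exp t + t * Real.exp t := by
  have h := Real.add_one_le_exp (-t)
  have h2 := mul_le_mul_of_nonneg_left h (Real.exp_pos t).le
  rw [← Real.exp_add] at h2
  simp only [add_neg_cancel, Real.exp_zero] at h2
  nlinarith

lemma novikov_A_le (t : ℝ) : 1 - Real.exp t + t * Real.exp t ≤ t ^ 2 * Real.exp |t| := by
  rcases le_or_gt 0 t with ht | ht
  · rw [abs_of_nonneg ht]
    have h1 := Real.add_one_le_exp t
    have h2 : (0:ℝ) ≤ 1 - t + t ^ 2 := by nlinarith [sq_nonneg (2*t - 1)]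
    have h3 : 0 ≤ (Real.exp t - (t + 1)) * (1 - t + t ^ 2) :=
      mul_nonneg (by linarith) h2
    nlinarith [pow_nonneg ht 3]
  · rw [abs_of_neg ht]
    set E := Real.exp t with hE
    set F := Real.exp (-t) with hF
    have hEF : E * F = 1 := by rw [hE, hF, ← Real.exp_add]; simp
    have hFpos : 0 < F := Real.exp_pos _
    have hF1 : 1 - t ≤ F := by have := Real.add_one_le_exp (-t); linarith
    have hE1 : 1 + t ≤ E := by have := Real.add_one_le_exp t; linarith
    have key : (1 - E + t * E) * F ≤ (t ^ 2 * F) * F := by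
      have hFE : F * (1 + t) ≤ 1 := by
        calc F * (1 + t) ≤ F * E := mul_le_mul_of_nonneg_left hE1 hFpos.le
        _ = 1 := by rw [mul_comm]; exact hEF
      have hexp : (1 - E + t * E) * F = F - 1 + t := by ring_nf; nlinarith [hEF]
      rw [hexp]
      nlinarith [mul_nonneg (neg_nonneg.2 ht.le) (sub_nonneg.2 hFE),
        mul_le_mul_of_nonneg_left (show (1:ℝ) ≤ F by linarith) (mul_nonneg (sq_nonneg t) hFpos.le)]
    exact le_of_mul_le_mul_right key hFpos

lemma sq_le_self_mul_sinh (k z : ℝ) (hk : 0 < k) : k * z ^ 2 ≤ z * Real.sinh (k * z) := by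
  rcases le_or_gt 0 z with hz | hz
  · have h : k * z ≤ Real.sinh (k * z) := Real.self_le_sinh_iff.2 (by positivity)
    nlinarith
  · have h : Real.sinh (k * z) ≤ k * z := Real.sinh_le_self_iff.2 (by nlinarith)
    nlinarith

lemma novikov_meas (α β c δ : ℝ) :
    Measurable (fun z : ℝ =>
      (1 - Real.exp (c * z) + c * z * Real.exp (c * z)) * meixnerLevyDensity α β δ z) := by
  unfold meixnerLevyDensity
  fun_prop

lemma novikov_middle (α β c δ : ℝ) (hα : 0 < α) (hδ : 0 < δ) :
    IntegrableOn (fun z : ℝ =>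
      (1 - Real.exp (c * z) + c * z * Real.exp (c * z)) * meixnerLevyDensity α β δ z)
      (Icc (-1) 1) := by
  apply Measure.integrableOn_of_bounded (M := δ * α * c ^ 2 * Real.exp (|c| + |β| / α) / Real.pi)
    measure_Icc_lt_top.ne (novikov_meas α β c δ).aestronglyMeasurable
  rw [ae_restrict_iff' measurableSet_Icc]
  filter_upwards with z hz
  obtain ⟨hz1, hz2⟩ := hz
  rcases eq_or_ne z 0 with rfl | hz0
  · simp only [mul_zero, zero_mul, meixnerLevyDensity, Real.sinh_zero, div_zero,
      Real.exp_zero, norm_zero]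
    positivity
  have hπα : 0 < Real.pi / α := div_pos Real.pi_pos hα
  have hzabs : |z| ≤ 1 := abs_le.2 ⟨hz1, hz2⟩
  have harg : Real.pi * z / α = (Real.pi / α) * z := by ring
  have hD : (Real.pi / α) * z ^ 2 ≤ z * Real.sinh (Real.pi * z / α) := by
    rw [harg]; exact sq_le_self_mul_sinh _ _ hπα
  have hDpos : 0 < (Real.pi / α) * z ^ 2 := by positivity
  have hA0 : 0 ≤ 1 - Real.exp (c * z) + c * z * Real.exp (c * z) := novikov_A_nonneg _
  have hA : 1 - Real.exp (c * z) + c * z * Real.exp (c * z) ≤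
      c ^ 2 * z ^ 2 * Real.exp |c| := by
    have h1 := novikov_A_le (c * z)
    have h2 : Real.exp |c * z| ≤ Real.exp |c| := by
      apply Real.exp_le_exp.2
      rw [abs_mul]
      exact mul_le_of_le_one_right (abs_nonneg _) hzabs
    calc 1 - Real.exp (c * z) + c * z * Real.exp (c * z)
        ≤ (c * z) ^ 2 * Real.exp |c * z| := h1
      _ ≤ (c * z) ^ 2 * Real.exp |c| := by gcongr
      _ = c ^ 2 * z ^ 2 * Real.exp |c| := by ring
  have hB : Real.exp (β * z / α) ≤ Real.exp (|β| / α) := by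
    apply Real.exp_le_exp.2
    rw [div_le_div_iff_of_pos_right hα]
    calc β * z ≤ |β * z| := le_abs_self _
      _ = |β| * |z| := abs_mul _ _
      _ ≤ |β| := mul_le_of_le_one_right (abs_nonneg _) hzabs
  have hnum : (1 - Real.exp (c * z) + c * z * Real.exp (c * z)) * (δ * Real.exp (β * z / α)) ≤
      (c ^ 2 * z ^ 2 * Real.exp |c|) * (δ * Real.exp (|β| / α)) := by
    apply mul_le_mul hA ?_ (by positivity) (by positivity)
    exact mul_le_mul_of_nonneg_left hB hδ.le
  have hval : 0 ≤ (1 - Real.exp (c * z) + c * z * Real.exp (c * z)) *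
      meixnerLevyDensity α β δ z := by
    apply mul_nonneg hA0
    unfold meixnerLevyDensity
    have : 0 < z * Real.sinh (Real.pi * z / α) := lt_of_lt_of_le hDpos hD
    positivity
  rw [Real.norm_eq_abs, abs_of_nonneg hval]
  calc (1 - Real.exp (c * z) + c * z * Real.exp (c * z)) * meixnerLevyDensity α β δ z
      = (1 - Real.exp (c * z) + c * z * Real.exp (c * z)) * (δ * Real.exp (β * z / α)) /
        (z * Real.sinh (Real.pi * z / α)) := by
        unfold meixnerLevyDensity; ring
    _ ≤ (c ^ 2 * z ^ 2 * Real.exp |c|) * (δ * Real.exp (|β| / α)) /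
        ((Real.pi / α) * z ^ 2) := div_le_div₀ (by positivity) hnum hDpos hD
    _ = δ * α * c ^ 2 * Real.exp (|c| + |β| / α) / Real.pi := by
        rw [Real.exp_add]
        field_simp

lemma le_exp_div_self (a z : ℝ) (ha : 0 < a) : z ≤ Real.exp (a * z) / a := by
  rw [le_div_iff₀ ha]
  nlinarith [Real.add_one_le_exp (a * z)]


lemma sinh_ge_of_ge (x x0 : ℝ) (hx : x0 ≤ x) :
    (1 - Real.exp (-(2 * x0))) / 2 * Real.exp x ≤ Real.sinh x := by
  rw [Real.sinh_eq]
  have h1 : Real.exp (-x) = Real.exp x * Real.exp (-(2 * x)) := by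
    rw [← Real.exp_add]; ring_nf
  have h2 : Real.exp (-(2 * x)) ≤ Real.exp (-(2 * x0)) := Real.exp_le_exp.2 (by linarith)
  have h3 := Real.exp_pos x
  rw [h1]; nlinarith


lemma novikov_tail (α β βs δ : ℝ) (hα : 0 < α)
    (hβ : β ∈ Set.Ioo (-Real.pi) Real.pi) (hβs : βs ∈ Set.Ioo (-Real.pi) Real.pi)
    (hδ : 0 < δ) :
    IntegrableOn (fun z : ℝ =>
      (1 - Real.exp ((βs - β) / α * z) + (βs - β) / α * z * Real.exp ((βs - β) / α * z)) *
        meixnerLevyDensity α β δ z) (Ici 1) := by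
  obtain ⟨hβ1, hβ2⟩ := hβ
  obtain ⟨hβs1, hβs2⟩ := hβs
  set c : ℝ := (βs - β) / α with hc
  set m : ℝ := (1 - Real.exp (-(2 * (Real.pi / α)))) / 2 with hmdef
  have hπα : 0 < Real.pi / α := div_pos Real.pi_pos hα
  have hm : 0 < m := by
    have : Real.exp (-(2 * (Real.pi / α))) < 1 := by
      rw [← Real.exp_zero]
      exact Real.exp_lt_exp.2 (by nlinarith)
    rw [hmdef]; linarith
  set b1 : ℝ := (Real.pi - β) / α with hb1def
  set b2 : ℝ := (Real.pi - βs) / α with hb2def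
  have hb1 : 0 < b1 := div_pos (by linarith) hα
  have hb2 : 0 < b2 := div_pos (by linarith) hα
  clear_value c m b1 b2
  set g : ℝ → ℝ := fun z => (δ / m) * Real.exp (-(b1 * z)) + (δ / m) * Real.exp (-(b2 * z)) +
    (δ / m * (|c| * (2 / b2))) * Real.exp (-(b2 / 2 * z)) with hgdef
  have hg : IntegrableOn g (Ici 1) := by
    rw [integrableOn_Ici_iff_integrableOn_Ioi]
    have i1 : IntegrableOn (fun z : ℝ => Real.exp (-(b1 * z))) (Ioi 1) := by
      simpa [neg_mul] using exp_neg_integrableOn_Ioi 1 hb1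
    have i2 : IntegrableOn (fun z : ℝ => Real.exp (-(b2 * z))) (Ioi 1) := by
      simpa [neg_mul] using exp_neg_integrableOn_Ioi 1 hb2
    have i3 : IntegrableOn (fun z : ℝ => Real.exp (-(b2 / 2 * z))) (Ioi 1) := by
      simpa [neg_mul] using exp_neg_integrableOn_Ioi 1 (by positivity : (0:ℝ) < b2 / 2)
    exact ((i1.const_mul _).add (i2.const_mul _)).add (i3.const_mul _)
  refine MeasureTheory.Integrable.mono hg ((novikov_meas α β c δ).aestronglyMeasurable.restrict) ?_
  rw [ae_restrict_iff' measurableSet_Ici]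
  filter_upwards with z hz
  rw [mem_Ici] at hz
  have hzpos : 0 < z := by linarith
  -- basic positivity facts
  have hsinh : m * Real.exp (Real.pi * z / α) ≤ Real.sinh (Real.pi * z / α) := by
    have := sinh_ge_of_ge (Real.pi * z / α) (Real.pi / α)
      (by rw [div_le_div_iff₀ hα hα]; nlinarith [mul_nonneg (mul_nonneg Real.pi_pos.le (sub_nonneg.2 hz)) hα.le])
    rw [← hmdef] at this; exact this
  have hsinhpos : 0 < Real.sinh (Real.pi * z / α) :=
    lt_of_lt_of_le (by positivity) hsinh
  have hD : m * Real.exp (Real.pi * z / α) ≤ z * Real.sinh (Real.pi * z / α) :=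
    hsinh.trans (le_mul_of_one_le_left hsinhpos.le hz)
  have hDpos : 0 < m * Real.exp (Real.pi * z / α) := by positivity
  have hA0 : 0 ≤ 1 - Real.exp (c * z) + c * z * Real.exp (c * z) := novikov_A_nonneg _
  have hcz : c * z ≤ |c| * z := mul_le_mul_of_nonneg_right (le_abs_self c) hzpos.le
  have hAle : 1 - Real.exp (c * z) + c * z * Real.exp (c * z) ≤
      1 + Real.exp (c * z) + |c| * z * Real.exp (c * z) := by
    nlinarith [Real.exp_pos (c * z)]
  -- exponent identities
  have he1 : β * z / α - Real.pi * z / α = -(b1 * z) := by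
    rw [hb1def]; field_simp; ring
  have he2 : c * z + β * z / α - Real.pi * z / α = -(b2 * z) := by
    rw [hb2def, hc]; field_simp; ring
  have hzexp : z * Real.exp (-(b2 * z)) ≤ (2 / b2) * Real.exp (-(b2 / 2 * z)) := by
    have h1 : z ≤ Real.exp (b2 / 2 * z) / (b2 / 2) := le_exp_div_self _ _ (by positivity)
    have h2 : Real.exp (b2 / 2 * z) * Real.exp (-(b2 * z)) = Real.exp (-(b2 / 2 * z)) := by
      rw [← Real.exp_add]; ring_nf
    calc z * Real.exp (-(b2 * z))
        ≤ (Real.exp (b2 / 2 * z) / (b2 / 2)) * Real.exp (-(b2 * z)) :=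
          mul_le_mul_of_nonneg_right h1 (Real.exp_pos _).le
      _ = (2 / b2) * Real.exp (-(b2 / 2 * z)) := by
          rw [div_mul_eq_mul_div, h2]; ring
  have hgpos : ∀ x : ℝ, 0 ≤ g x := fun x => by
    rw [hgdef]; positivity
  rw [Real.norm_eq_abs, Real.norm_eq_abs, abs_of_nonneg (hgpos z)]
  have hval : 0 ≤ (1 - Real.exp (c * z) + c * z * Real.exp (c * z)) *
      meixnerLevyDensity α β δ z := by
    apply mul_nonneg hA0
    unfold meixnerLevyDensity
    positivity
  rw [abs_of_nonneg hval]
  calc (1 - Real.exp (c * z) + c * z * Real.exp (c * z)) * meixnerLevyDensity α β δ z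
      = ((1 - Real.exp (c * z) + c * z * Real.exp (c * z)) * (δ * Real.exp (β * z / α))) /
        (z * Real.sinh (Real.pi * z / α)) := by
        unfold meixnerLevyDensity; ring
    _ ≤ ((1 + Real.exp (c * z) + |c| * z * Real.exp (c * z)) * (δ * Real.exp (β * z / α))) /
        (m * Real.exp (Real.pi * z / α)) := by
        apply div_le_div₀ (by positivity) _ hDpos hD
        exact mul_le_mul_of_nonneg_right hAle (by positivity)
    _ = (δ / m) * Real.exp (β * z / α - Real.pi * z / α) +
        (δ / m) * Real.exp (c * z + β * z / α - Real.pi * z / α) +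
        (δ / m * |c|) * (z * Real.exp (c * z + β * z / α - Real.pi * z / α)) := by
        rw [Real.exp_sub, Real.exp_sub, Real.exp_add]
        field_simp [hm.ne']
    _ = (δ / m) * Real.exp (-(b1 * z)) + (δ / m) * Real.exp (-(b2 * z)) +
        (δ / m * |c|) * (z * Real.exp (-(b2 * z))) := by rw [he1, he2]
    _ ≤ g z := by
        rw [hgdef]
        have h3 : (δ / m * |c|) * (z * Real.exp (-(b2 * z))) ≤
            (δ / m * (|c| * (2 / b2))) * Real.exp (-(b2 / 2 * z)) := by
          have := mul_le_mul_of_nonneg_left hzexp (by positivity : (0:ℝ) ≤ δ / m * |c|)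
          calc (δ / m * |c|) * (z * Real.exp (-(b2 * z)))
              ≤ (δ / m * |c|) * ((2 / b2) * Real.exp (-(b2 / 2 * z))) := this
            _ = (δ / m * (|c| * (2 / b2))) * Real.exp (-(b2 / 2 * z)) := by ring
        linarith


/-- Novikov condition for the structure preserving measure change with Radon–Nikodym
exponent `h(z) = ((β* − β)/α) z`. -/
theorem meixner_novikov_condition (α β βs δ : ℝ) (hα : 0 < α)
    (hβ : β ∈ Set.Ioo (-Real.pi) Real.pi) (hβs : βs ∈ Set.Ioo (-Real.pi) Real.pi)
    (hδ : 0 < δ) (h : ℝ → ℝ) (hh : ∀ z, h z = (βs - β) / α * z) :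
    IntegrableOn
      (fun z : ℝ => (1 - Real.exp (h z) + h z * Real.exp (h z)) * meixnerLevyDensity α β δ z)
      {0}ᶜ := by
  simp only [hh]
  have hmid : IntegrableOn (fun z : ℝ =>
      (1 - Real.exp ((βs - β) / α * z) + (βs - β) / α * z * Real.exp ((βs - β) / α * z)) *
        meixnerLevyDensity α β δ z) (Icc (-1) 1) :=
    novikov_middle α β ((βs - β) / α) δ hα hδ
  have hright := novikov_tail α β βs δ hα hβ hβs hδ
  have hβn : -β ∈ Set.Ioo (-Real.pi) Real.pi := ⟨by linarith [hβ.2], by linarith [hβ.1]⟩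
  have hβsn : -βs ∈ Set.Ioo (-Real.pi) Real.pi := ⟨by linarith [hβs.2], by linarith [hβs.1]⟩
  have hG := novikov_tail α (-β) (-βs) δ hα hβn hβsn hδ
  have hleft : IntegrableOn (fun z : ℝ =>
      (1 - Real.exp ((βs - β) / α * z) + (βs - β) / α * z * Real.exp ((βs - β) / α * z)) *
        meixnerLevyDensity α β δ z) (Iic (-1)) := by
    have hpre : (Neg.neg ⁻¹' (Iic (-1 : ℝ) : Set ℝ)) = Ici 1 := by
      ext x; simp
    have hcomp : ((fun z : ℝ =>
        (1 - Real.exp ((βs - β) / α * z) + (βs - β) / α * z * Real.exp ((βs - β) / α * z)) *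
          meixnerLevyDensity α β δ z) ∘ Neg.neg) = fun z : ℝ =>
        (1 - Real.exp ((-βs - -β) / α * z) + (-βs - -β) / α * z * Real.exp ((-βs - -β) / α * z)) *
          meixnerLevyDensity α (-β) δ z := by
      funext z
      simp only [Function.comp_apply]
      have h1 : (βs - β) / α * -z = (-βs - -β) / α * z := by ring
      have h2 : meixnerLevyDensity α β δ (-z) = meixnerLevyDensity α (-β) δ z := by
        unfold meixnerLevyDensity
        rw [show Real.pi * -z / α = -(Real.pi * z / α) from by ring, Real.sinh_neg,
          show β * -z / α = -β * z / α from by ring]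
        ring
      rw [h1, h2]
    exact (MeasurePreserving.integrableOn_comp_preimage
      (Measure.measurePreserving_neg (volume : Measure ℝ))
      (Homeomorph.neg ℝ).measurableEmbedding).1 (by rw [hpre, hcomp]; exact hG)
  have hsub : ({0}ᶜ : Set ℝ) ⊆ (Iic (-1) ∪ Icc (-1) 1) ∪ Ici 1 := by
    intro x _
    rcases le_total x (-1) with h1 | h1
    · exact Or.inl (Or.inl h1)
    rcases le_total x 1 with h2 | h2
    · exact Or.inl (Or.inr ⟨h1, h2⟩)
    · exact Or.inr h2
  exact (((hleft.union hmid).union hright).mono_set hsub)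
end

section
/- (Proposition 4.1: cliquet option price.) Let (Ω, F, Q) be a probability space and let R₁, …, R_n be independent, identically distributed real random variables with R_k > −1 almost surely. Let c ≥ 0 (local cap), g ∈ ℝ (guaranteed rate), and set Z_k := min(c, R_k) − g/n, which are i.i.d. bounded random variables. Then E[ max{0, Σ_{k=1}^n Z_k} ] = (n/2) · E[Z₁] + (1/π) ∫_{0}^{∞} (1 − Re( φ_Z(x) )) / x² dx, where φ_Z(x) := ( E[e^{i x Z₁}] )^n. Consequently, with notional K > 0, riskless rate r and maturity T, the cliquet option price C₀ = K e^{−rT} (1 + g + E[max{0, Σ_{k=1}^n Z_k}]) equals K e^{−rT} ( 1 + g + (n/2) E[Z₁] + (1/π) ∫_{0}^{∞} (1 − Re φ_Z(x)) / x² dx ). -/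
open MeasureTheory Real Set

section CliquetAux
open Filter

-- Laplace transform pieces
lemma texp_both {x : ℝ} (hx : 0 < x) :
    IntegrableOn (fun t : ℝ => t * Real.exp (-(x*t))) (Ioi 0) ∧
    ∫ t in Ioi (0:ℝ), t * Real.exp (-(x*t)) = 1/x^2 := by
  have hcont : ContinuousWithinAt (fun t : ℝ => -(Real.exp (-(x*t)) * (x*t+1))/x^2) (Ici 0) 0 :=
    (((by fun_prop : Continuous fun t:ℝ => -(Real.exp (-(x*t)) * (x*t+1)))).div_const _).continuousWithinAt
  have hderiv : ∀ t ∈ Ioi (0:ℝ), HasDerivAt (fun t : ℝ => -(Real.exp (-(x*t)) * (x*t+1))/x^2)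
      (t * Real.exp (-(x*t))) t := by
    intro t ht
    have h1 : HasDerivAt (fun t : ℝ => -(x*t)) (-x) t := by
      simpa using ((hasDerivAt_id t).const_mul (-x))
    have h2 : HasDerivAt (fun t : ℝ => Real.exp (-(x*t))) (Real.exp (-(x*t)) * (-x)) t :=
      (Real.hasDerivAt_exp _).comp t h1
    have h3 : HasDerivAt (fun t : ℝ => x*t+1) x t := by
      simpa using ((hasDerivAt_id t).const_mul x).add_const 1
    have := ((h2.mul h3).neg).div_const (x^2)
    refine this.congr_deriv ?_
    rw [div_eq_iff (pow_ne_zero 2 hx.ne')]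
    ring
  have hpos : ∀ t ∈ Ioi (0:ℝ), 0 ≤ t * Real.exp (-(x*t)) := fun t ht =>
    mul_nonneg (le_of_lt ht) (Real.exp_nonneg _)
  have htend : Tendsto (fun t : ℝ => -(Real.exp (-(x*t)) * (x*t+1))/x^2) atTop (nhds 0) := by
    have h0 : Tendsto (fun u : ℝ => u * Real.exp (-u) + Real.exp (-u)) atTop (nhds 0) := by
      have := (Real.tendsto_pow_mul_exp_neg_atTop_nhds_zero 1)
      simpa using this.add (Real.tendsto_exp_neg_atTop_nhds_zero)
    have hxt : Tendsto (fun t : ℝ => x*t) atTop atTop :=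
      Tendsto.const_mul_atTop hx tendsto_id
    have := (h0.comp hxt).neg.div_const (x^2)
    simp only [neg_zero, zero_div] at this
    convert this using 2 with t
    simp only [Function.comp]
    ring
  refine ⟨integrableOn_Ioi_deriv_of_nonneg hcont hderiv hpos htend, ?_⟩
  rw [integral_Ioi_of_hasDerivAt_of_nonneg hcont hderiv hpos htend]
  simp
  ring

lemma exp_integral {t : ℝ} (ht : 0 < t) :
    ∫ x in Ioi (0:ℝ), Real.exp (-(t*x)) = 1/t := by
  have hcont : ContinuousWithinAt (fun x : ℝ => -Real.exp (-(t*x))/t) (Ici 0) 0 :=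
    (((by fun_prop : Continuous fun x:ℝ => -Real.exp (-(t*x)))).div_const _).continuousWithinAt
  have hderiv : ∀ x ∈ Ioi (0:ℝ), HasDerivAt (fun x : ℝ => -Real.exp (-(t*x))/t)
      (Real.exp (-(t*x))) x := by
    intro x hx
    have h1 : HasDerivAt (fun x : ℝ => -(t*x)) (-t) x := by
      simpa using ((hasDerivAt_id x).const_mul (-t))
    have h2 : HasDerivAt (fun x : ℝ => Real.exp (-(t*x))) (Real.exp (-(t*x)) * (-t)) x :=
      (Real.hasDerivAt_exp _).comp x h1
    have := (h2.neg).div_const t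
    refine this.congr_deriv ?_
    rw [div_eq_iff ht.ne']; ring
  have hpos : ∀ x ∈ Ioi (0:ℝ), 0 ≤ Real.exp (-(t*x)) := fun x _ => Real.exp_nonneg _
  have htend : Tendsto (fun x : ℝ => -Real.exp (-(t*x))/t) atTop (nhds 0) := by
    have hxt : Tendsto (fun x : ℝ => t*x) atTop atTop :=
      Tendsto.const_mul_atTop ht tendsto_id
    have := ((Real.tendsto_exp_neg_atTop_nhds_zero.comp hxt).neg).div_const t
    simpa [Function.comp] using this
  rw [integral_Ioi_of_hasDerivAt_of_nonneg hcont hderiv hpos htend]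
  simp
  field_simp

lemma lapcos_deriv {t : ℝ} : ∀ x ∈ Ici (0:ℝ),
    HasDerivAt (fun x : ℝ => Real.exp (-(t*x)) * (Real.sin x - t * Real.cos x)/(1+t^2))
      (Real.exp (-(t*x)) * Real.cos x) x := by
  intro x _
  have h1 : HasDerivAt (fun x : ℝ => -(t*x)) (-t) x := by
    simpa using ((hasDerivAt_id x).const_mul (-t))
  have h2 : HasDerivAt (fun x : ℝ => Real.exp (-(t*x))) (Real.exp (-(t*x)) * (-t)) x :=
    (Real.hasDerivAt_exp _).comp x h1
  have h3 : HasDerivAt (fun x : ℝ => Real.sin x - t * Real.cos x)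
      (Real.cos x - t * (-Real.sin x)) x :=
    (Real.hasDerivAt_sin x).sub ((Real.hasDerivAt_cos x).const_mul t)
  have := (h2.mul h3).div_const (1+t^2)
  refine this.congr_deriv ?_
  have h4 : (1:ℝ)+t^2 ≠ 0 := by positivity
  rw [div_eq_iff h4]
  ring

lemma lapcos_integrableOn {t : ℝ} (ht : 0 < t) :
    IntegrableOn (fun x : ℝ => Real.exp (-(t*x)) * Real.cos x) (Ioi 0) := by
  refine (exp_neg_integrableOn_Ioi 0 ht).mono' ?_ ?_
  · exact ((by fun_prop : Continuous fun x : ℝ =>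
      Real.exp (-(t*x)) * Real.cos x)).aestronglyMeasurable
  · filter_upwards with x
    rw [Real.norm_eq_abs, abs_mul, Real.abs_exp]
    calc Real.exp (-(t*x)) * |Real.cos x| ≤ Real.exp (-(t*x)) * 1 :=
          mul_le_mul_of_nonneg_left (Real.abs_cos_le_one x) (Real.exp_nonneg _)
      _ = Real.exp (-(t*x)) := mul_one _
      _ ≤ Real.exp (-t*x) := by rw [neg_mul]

lemma lapcos_integral {t : ℝ} (ht : 0 < t) :
    ∫ x in Ioi (0:ℝ), Real.exp (-(t*x)) * Real.cos x = t/(1+t^2) := by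
  have hcont : ContinuousWithinAt
      (fun x : ℝ => Real.exp (-(t*x)) * (Real.sin x - t * Real.cos x)/(1+t^2)) (Ici 0) 0 :=
    (((by fun_prop : Continuous fun x:ℝ =>
      Real.exp (-(t*x)) * (Real.sin x - t * Real.cos x))).div_const _).continuousWithinAt
  have htend : Tendsto (fun x : ℝ => Real.exp (-(t*x)) * (Real.sin x - t * Real.cos x)/(1+t^2))
      atTop (nhds 0) := by
    have hb : Tendsto (fun x : ℝ => Real.exp (-(t*x))) atTop (nhds 0) := by
      have hxt : Tendsto (fun x : ℝ => t*x) atTop atTop :=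
        Tendsto.const_mul_atTop ht tendsto_id
      have := Real.tendsto_exp_neg_atTop_nhds_zero.comp hxt
      simpa [Function.comp_def] using this
    have : Tendsto (fun x : ℝ => Real.exp (-(t*x)) * (Real.sin x - t * Real.cos x)) atTop
        (nhds 0) := by
      apply squeeze_zero_norm ?_ (by simpa using hb.const_mul (1+t))
      intro x
      rw [norm_mul, Real.norm_eq_abs, Real.norm_eq_abs, Real.abs_exp]
      have h1 : |Real.sin x - t * Real.cos x| ≤ 1 + t := by
        calc |Real.sin x - t * Real.cos x| ≤ |Real.sin x| + |t * Real.cos x| := abs_sub _ _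
        _ ≤ 1 + t := by
            rw [abs_mul]
            have := Real.abs_sin_le_one x
            have := Real.abs_cos_le_one x
            nlinarith [abs_nonneg t, le_abs_self t, abs_of_pos ht]
      calc Real.exp (-(t*x)) * |Real.sin x - t * Real.cos x| ≤ Real.exp (-(t*x)) * (1+t) :=
            mul_le_mul_of_nonneg_left h1 (Real.exp_nonneg _)
        _ = (1+t) * Real.exp (-(t*x)) := mul_comm _ _
    simpa using this.div_const (1+t^2)
  rw [integral_Ioi_of_hasDerivAt_of_tendsto hcont (fun x hx => lapcos_deriv x (mem_Ici.2 (le_of_lt (mem_Ioi.1 hx))))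
    (lapcos_integrableOn ht) htend]
  have h4 : (1:ℝ)+t^2 ≠ 0 := by positivity
  field_simp
  simp


lemma one_sub_cos_le (u : ℝ) : 1 - Real.cos u ≤ u^2/2 := by
  have h1 : Real.sin (u/2)^2 = 1/2 - Real.cos (2*(u/2))/2 := Real.sin_sq_eq_half_sub (u/2)
  have h2 : Real.sin (u/2)^2 ≤ (u/2)^2 := Real.sin_sq_le_sq
  have h3 : (2:ℝ)*(u/2) = u := by ring
  rw [h3] at h1
  nlinarith

lemma integrableOn_G (a : ℝ) :
    IntegrableOn (fun x : ℝ => (1 - Real.cos (a*x))/x^2) (Ioi 0) := by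
  have hmeas : AEStronglyMeasurable (fun x : ℝ => (1 - Real.cos (a*x))/x^2)
      (volume.restrict (Ioi (0:ℝ))) := by
    refine (Measurable.aestronglyMeasurable ?_)
    fun_prop
  have h1 : IntegrableOn (fun x : ℝ => (1 - Real.cos (a*x))/x^2) (Ioc 0 1) := by
    refine Integrable.mono' (g := fun _ : ℝ => a^2/2)
      (integrableOn_const measure_Ioc_lt_top.ne) (hmeas.mono_set Ioc_subset_Ioi_self) ?_
    refine (ae_restrict_iff' measurableSet_Ioc).2 (ae_of_all _ fun x hx => ?_)
    have hx0 : 0 < x := hx.1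
    have hx1 : x ≤ 1 := hx.2
    have hb : 1 - Real.cos (a*x) ≤ (a*x)^2/2 := one_sub_cos_le (a*x)
    have hnn : 0 ≤ 1 - Real.cos (a*x) := by
      have := Real.cos_le_one (a*x); linarith
    rw [Real.norm_eq_abs, abs_of_nonneg (by positivity)]
    rw [div_le_iff₀ (by positivity)]
    calc 1 - Real.cos (a*x) ≤ (a*x)^2/2 := hb
      _ = a^2/2 * x^2 := by ring
      _ ≤ a^2/2 * x^2 := le_refl _
  have h2 : IntegrableOn (fun x : ℝ => (1 - Real.cos (a*x))/x^2) (Ioi 1) := by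
    refine Integrable.mono' (g := fun x : ℝ => 2/x^2) ?_ (hmeas.mono_set (by
      intro x hx; exact lt_trans one_pos (mem_Ioi.1 hx))) ?_
    · have := integrableOn_Ioi_rpow_of_lt (show (-2:ℝ) < -1 by norm_num) one_pos
      refine (this.const_mul 2).congr ((ae_restrict_iff' measurableSet_Ioi).2
        (ae_of_all _ fun x hx => ?_))
      show (2:ℝ) * x ^ (-2:ℝ) = 2 / x^2
      rw [Real.rpow_neg (le_of_lt (lt_trans one_pos hx)), Real.rpow_two]
      ring
    · refine (ae_restrict_iff' measurableSet_Ioi).2 (ae_of_all _ fun x hx => ?_)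
      have hx0 : (0:ℝ) < x := lt_trans one_pos hx
      have hnn : 0 ≤ 1 - Real.cos (a*x) := by
        have := Real.cos_le_one (a*x); linarith
      rw [Real.norm_eq_abs, abs_of_nonneg (by positivity), div_le_div_iff_of_pos_right (by positivity)]
      have := Real.neg_one_le_cos (a*x); linarith
  have : Ioc (0:ℝ) 1 ∪ Ioi 1 = Ioi 0 := Ioc_union_Ioi_eq_Ioi zero_le_one
  rw [← this]
  exact h1.union h2

lemma lintJ : ∫⁻ x in Ioi (0:ℝ), ENNReal.ofReal ((1 - Real.cos x)/x^2)
    = ENNReal.ofReal (π/2) := by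
  have step1 : ∀ x ∈ Ioi (0:ℝ), ENNReal.ofReal ((1 - Real.cos x)/x^2)
      = ∫⁻ t in Ioi (0:ℝ), ENNReal.ofReal ((1 - Real.cos x) * (t * Real.exp (-(x*t)))) := by
    intro x hx
    have hx0 : (0:ℝ) < x := hx
    have hnn : 0 ≤ 1 - Real.cos x := by have := Real.cos_le_one x; linarith
    have hint : Integrable (fun t : ℝ => (1 - Real.cos x) * (t * Real.exp (-(x*t))))
        (volume.restrict (Ioi 0)) := ((texp_both hx0).1).const_mul _
    have hnn2 : 0 ≤ᵐ[volume.restrict (Ioi (0:ℝ))]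
        fun t : ℝ => (1 - Real.cos x) * (t * Real.exp (-(x*t))) := by
      refine (ae_restrict_iff' measurableSet_Ioi).2 (ae_of_all _ fun t ht => ?_)
      exact mul_nonneg hnn (mul_nonneg (le_of_lt ht) (Real.exp_nonneg _))
    rw [← ofReal_integral_eq_lintegral_ofReal hint hnn2,
      integral_const_mul, (texp_both hx0).2]
    congr 1
    field_simp
  rw [setLIntegral_congr_fun measurableSet_Ioi step1]
  rw [lintegral_lintegral_swap]
  · have step3 : ∀ t ∈ Ioi (0:ℝ),
        (∫⁻ x in Ioi (0:ℝ), ENNReal.ofReal ((1 - Real.cos x) * (t * Real.exp (-(x*t)))))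
        = ENNReal.ofReal ((1+t^2)⁻¹) := by
      intro t ht
      have ht0 : (0:ℝ) < t := ht
      have hfun : ∀ x : ℝ, (1 - Real.cos x) * (t * Real.exp (-(x*t)))
          = t * Real.exp (-(t*x)) - t * (Real.exp (-(t*x)) * Real.cos x) := by
        intro x; rw [mul_comm x t]; ring
      have hint1 : Integrable (fun x : ℝ => t * Real.exp (-(t*x))) (volume.restrict (Ioi 0)) := by
        simpa [neg_mul] using (exp_neg_integrableOn_Ioi 0 ht0).const_mul t
      have hint2 : Integrable (fun x : ℝ => t * (Real.exp (-(t*x)) * Real.cos x))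
          (volume.restrict (Ioi 0)) := (lapcos_integrableOn ht0).const_mul t
      have hint : Integrable (fun x : ℝ => (1 - Real.cos x) * (t * Real.exp (-(x*t))))
          (volume.restrict (Ioi 0)) := by
        refine (hint1.sub hint2).congr (ae_of_all _ fun x => (hfun x).symm)
      have hnn2 : 0 ≤ᵐ[volume.restrict (Ioi (0:ℝ))]
          fun x : ℝ => (1 - Real.cos x) * (t * Real.exp (-(x*t))) := by
        refine ae_of_all _ fun x => ?_
        have := Real.cos_le_one x
        exact mul_nonneg (by linarith) (mul_nonneg (le_of_lt ht0) (Real.exp_nonneg _))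
      rw [← ofReal_integral_eq_lintegral_ofReal hint hnn2]
      congr 1
      have : ∫ x in Ioi (0:ℝ), (1 - Real.cos x) * (t * Real.exp (-(x*t)))
          = ∫ x in Ioi (0:ℝ),
            (t * Real.exp (-(t*x)) - t * (Real.exp (-(t*x)) * Real.cos x)) :=
        setIntegral_congr_fun measurableSet_Ioi (fun x _ => hfun x)
      rw [this, integral_sub hint1 hint2, integral_const_mul,
        integral_const_mul, exp_integral ht0, lapcos_integral ht0]
      have h4 : (1:ℝ)+t^2 ≠ 0 := by positivity
      field_simp
      ring
    rw [setLIntegral_congr_fun measurableSet_Ioi step3]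
    rw [← ofReal_integral_eq_lintegral_ofReal integrable_inv_one_add_sq.integrableOn
      (ae_of_all _ fun t => by positivity)]
    rw [integral_Ioi_inv_one_add_sq]
    simp [Real.arctan_zero]
  · apply Measurable.aemeasurable
    apply Measurable.ennreal_ofReal
    fun_prop

lemma J_integral : ∫ x in Ioi (0:ℝ), (1 - Real.cos x)/x^2 = π/2 := by
  have hnn : 0 ≤ᵐ[volume.restrict (Ioi (0:ℝ))] fun x : ℝ => (1 - Real.cos x)/x^2 := by
    refine (ae_restrict_iff' measurableSet_Ioi).2 (ae_of_all _ fun x hx => ?_)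
    have := Real.cos_le_one x
    exact div_nonneg (by linarith) (sq_nonneg x)
  rw [integral_eq_lintegral_of_nonneg_ae hnn
    (by apply Measurable.aestronglyMeasurable; fun_prop), lintJ,
    ENNReal.toReal_ofReal (by linarith [Real.pi_pos])]

lemma lemA (a : ℝ) : ∫ x in Ioi (0:ℝ), (1 - Real.cos (a*x))/x^2 = π * |a| / 2 := by
  rcases eq_or_ne a 0 with rfl | ha
  · simp
  · have hb : 0 < |a| := abs_pos.2 ha
    have key := integral_comp_mul_left_Ioi (fun y => (1 - Real.cos y)/y^2) 0 hb
    rw [mul_zero, J_integral] at key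
    have hcong : ∀ x ∈ Ioi (0:ℝ), (1 - Real.cos (a*x))/x^2
        = |a|^2 * ((1 - Real.cos (|a| * x))/(|a| * x)^2) := by
      intro x hx
      have hx0 : (0:ℝ) < x := hx
      have h1 : |a| * x = |a*x| := by rw [abs_mul, abs_of_pos hx0]
      rw [h1, Real.cos_abs]
      rw [abs_mul, abs_of_pos hx0]
      rw [mul_pow]
      rw [sq_abs]
      field_simp
    rw [setIntegral_congr_fun measurableSet_Ioi hcong, integral_const_mul, key]
    rw [smul_eq_mul, sq_abs]
    have h2 : a^2 = |a| * |a| := by rw [← sq_abs]; ring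
    rw [h2]
    field_simp

section Prob
open ProbabilityTheory
variable {Ω : Type*} [MeasurableSpace Ω] {μ : Measure Ω} [IsProbabilityMeasure μ]

lemma integrable_of_bounded_c {f : Ω → ℂ} (hf : Measurable f) (hb : ∀ ω, ‖f ω‖ ≤ 1) :
    Integrable f μ :=
  Integrable.mono' (integrable_const 1) hf.aestronglyMeasurable (ae_of_all _ hb)

lemma integrable_of_bounded_r {f : Ω → ℝ} {B : ℝ} (hf : Measurable f)
    (hb : ∀ᵐ ω ∂μ, |f ω| ≤ B) : Integrable f μ :=
  Integrable.mono' (integrable_const B) hf.aestronglyMeasurable hb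

lemma indep_integral_mul_complex {X Y : Ω → ℂ}
    (h : IndepFun X Y μ) (hX : Measurable X) (hY : Measurable Y)
    (hXb : ∀ ω, ‖X ω‖ ≤ 1) (hYb : ∀ ω, ‖Y ω‖ ≤ 1) :
    ∫ ω, X ω * Y ω ∂μ = (∫ ω, X ω ∂μ) * ∫ ω, Y ω ∂μ := by
  have hXi : Integrable X μ := integrable_of_bounded_c hX hXb
  have hYi : Integrable Y μ := integrable_of_bounded_c hY hYb
  have hXYi : Integrable (fun ω => X ω * Y ω) μ := by
    refine Integrable.mono' (integrable_const 1) (hX.mul hY).aestronglyMeasurable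
      (ae_of_all _ fun ω => ?_)
    rw [norm_mul]
    calc ‖X ω‖ * ‖Y ω‖ ≤ 1 * 1 :=
        mul_le_mul (hXb ω) (hYb ω) (norm_nonneg _) zero_le_one
      _ = 1 := one_mul 1
  have hXr : Integrable (fun ω => (X ω).re) μ := by simpa using hXi.re
  have hXm : Integrable (fun ω => (X ω).im) μ := by simpa using hXi.im
  have hYr : Integrable (fun ω => (Y ω).re) μ := by simpa using hYi.re
  have hYm : Integrable (fun ω => (Y ω).im) μ := by simpa using hYi.im
  have hrr : IndepFun (fun ω => (X ω).re) (fun ω => (Y ω).re) μ :=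
    h.comp Complex.measurable_re Complex.measurable_re
  have hrm : IndepFun (fun ω => (X ω).re) (fun ω => (Y ω).im) μ :=
    h.comp Complex.measurable_re Complex.measurable_im
  have hmr : IndepFun (fun ω => (X ω).im) (fun ω => (Y ω).re) μ :=
    h.comp Complex.measurable_im Complex.measurable_re
  have hmm : IndepFun (fun ω => (X ω).im) (fun ω => (Y ω).im) μ :=
    h.comp Complex.measurable_im Complex.measurable_im
  have err := hrr.integral_fun_mul_eq_mul_integral hXr.aestronglyMeasurable hYr.aestronglyMeasurable
  have erm := hrm.integral_fun_mul_eq_mul_integral hXr.aestronglyMeasurable hYm.aestronglyMeasurable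
  have emr := hmr.integral_fun_mul_eq_mul_integral hXm.aestronglyMeasurable hYr.aestronglyMeasurable
  have emm := hmm.integral_fun_mul_eq_mul_integral hXm.aestronglyMeasurable hYm.aestronglyMeasurable
  have irr : Integrable (fun ω => (X ω).re * (Y ω).re) μ := hrr.integrable_mul hXr hYr
  have irm : Integrable (fun ω => (X ω).re * (Y ω).im) μ := hrm.integrable_mul hXr hYm
  have imr : Integrable (fun ω => (X ω).im * (Y ω).re) μ := hmr.integrable_mul hXm hYr
  have imm : Integrable (fun ω => (X ω).im * (Y ω).im) μ := hmm.integrable_mul hXm hYm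
  have iXr : (∫ ω, X ω ∂μ).re = ∫ ω, (X ω).re ∂μ := by
    have := integral_re hXi; simp only [RCLike.re_to_complex] at this; exact this.symm
  have iXm : (∫ ω, X ω ∂μ).im = ∫ ω, (X ω).im ∂μ := by
    have := integral_im hXi; simp only [RCLike.im_to_complex] at this; exact this.symm
  have iYr : (∫ ω, Y ω ∂μ).re = ∫ ω, (Y ω).re ∂μ := by
    have := integral_re hYi; simp only [RCLike.re_to_complex] at this; exact this.symm
  have iYm : (∫ ω, Y ω ∂μ).im = ∫ ω, (Y ω).im ∂μ := by
    have := integral_im hYi; simp only [RCLike.im_to_complex] at this; exact this.symm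
  apply Complex.ext
  · have h1 : (∫ ω, X ω * Y ω ∂μ).re
        = ∫ ω, ((X ω).re * (Y ω).re - (X ω).im * (Y ω).im) ∂μ := by
      have h0 := integral_re hXYi
      simp only [RCLike.re_to_complex] at h0
      rw [← h0]
      congr 1
    rw [h1, integral_sub irr imm, err, emm, Complex.mul_re, iXr, iXm, iYr, iYm]
  · have h1 : (∫ ω, X ω * Y ω ∂μ).im
        = ∫ ω, ((X ω).re * (Y ω).im + (X ω).im * (Y ω).re) ∂μ := by
      have h0 := integral_im hXYi
      simp only [RCLike.im_to_complex] at h0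
      rw [← h0]
      congr 1
    rw [h1, integral_add irm imr, erm, emr, Complex.mul_im, iXr, iXm, iYr, iYm]

lemma integral_finset_prod_complex {ι : Type*} {f : ι → Ω → ℂ}
    (hindep : iIndepFun f μ) (hmeas : ∀ i, Measurable (f i))
    (hb : ∀ i ω, ‖f i ω‖ ≤ 1) (s : Finset ι) :
    ∫ ω, ∏ i ∈ s, f i ω ∂μ = ∏ i ∈ s, ∫ ω, f i ω ∂μ := by
  classical
  induction s using Finset.induction_on with
  | empty => simp
  | insert a s ha ih =>
    have hprodmeas : Measurable (fun ω => ∏ i ∈ s, f i ω) :=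
      Finset.measurable_prod s (fun i _ => hmeas i)
    have hprodbd : ∀ ω, ‖∏ i ∈ s, f i ω‖ ≤ 1 := by
      intro ω
      rw [norm_prod]
      exact Finset.prod_le_one (fun i _ => norm_nonneg _) (fun i _ => hb i ω)
    have hip : IndepFun (f a) (fun ω => ∏ i ∈ s, f i ω) μ := by
      have := (hindep.indepFun_finsetProd_of_notMem hmeas ha).symm
      convert this using 1
      funext ω
      simp [Finset.prod_apply]
    have : ∫ ω, ∏ i ∈ insert a s, f i ω ∂μ
        = ∫ ω, f a ω * ∏ i ∈ s, f i ω ∂μ := by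
      congr 1; funext ω; exact Finset.prod_insert ha
    rw [this, indep_integral_mul_complex hip (hmeas a) hprodmeas (hb a) hprodbd,
      Finset.prod_insert ha, ih]

end Prob

lemma main_tonelli {Ω : Type*} [MeasurableSpace Ω] (μ : Measure Ω) [IsProbabilityMeasure μ]
    (S : Ω → ℝ) (hSmeas : Measurable S) (hSabs : Integrable (fun ω => |S ω|) μ)
    (ψ : ℝ → ℂ) (hψ : ∀ x : ℝ, (ψ x).re = ∫ ω, Real.cos (S ω * x) ∂μ) :
    ∫ x in Ioi (0:ℝ), (1 - (ψ x).re)/x^2 = π * (∫ ω, |S ω| ∂μ)/2 := by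
  have hcosint : ∀ x : ℝ, Integrable (fun ω => Real.cos (S ω * x)) μ :=
    fun x => integrable_of_bounded_r (B := 1)
      (Real.measurable_cos.comp (hSmeas.mul measurable_const))
      (ae_of_all _ fun ω => Real.abs_cos_le_one _)
  have hkey : ∀ x : ℝ, 1 - (ψ x).re = ∫ ω, (1 - Real.cos (S ω * x)) ∂μ := by
    intro x
    rw [integral_sub (integrable_const 1) (hcosint x), integral_const, probReal_univ, hψ x]
    simp
  have hGmeas : Measurable (fun p : ℝ × Ω => (1 - Real.cos (S p.2 * p.1))/p.1^2) := by
    apply Measurable.div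
    · exact measurable_const.sub (((hSmeas.comp measurable_snd).mul measurable_fst).cos)
    · exact measurable_fst.pow_const 2
  have hstep1 : ∀ x ∈ Ioi (0:ℝ),
      (1 - (ψ x).re)/x^2 = ∫ ω, (1 - Real.cos (S ω * x))/x^2 ∂μ := by
    intro x _
    rw [hkey x, integral_div]
  rw [setIntegral_congr_fun measurableSet_Ioi hstep1]
  have hnn' : ∀ (x : ℝ) (ω : Ω), 0 ≤ (1 - Real.cos (S ω * x))/x^2 := fun x ω =>
    div_nonneg (by linarith [Real.cos_le_one (S ω * x)]) (sq_nonneg x)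
  have hnn : ∀ x : ℝ, 0 ≤ ∫ ω, (1 - Real.cos (S ω * x))/x^2 ∂μ := fun x =>
    integral_nonneg (hnn' x)
  have hsm : AEStronglyMeasurable (fun x => ∫ ω, (1 - Real.cos (S ω * x))/x^2 ∂μ)
      (volume.restrict (Ioi 0)) :=
    (hGmeas.stronglyMeasurable.integral_prod_right').aestronglyMeasurable.restrict
  rw [integral_eq_lintegral_of_nonneg_ae (ae_of_all _ hnn) hsm]
  have hGint : ∀ x : ℝ, x ∈ Ioi (0:ℝ) →
      Integrable (fun ω => (1 - Real.cos (S ω * x))/x^2) μ := by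
    intro x hx
    have hx0 : (0:ℝ) < x := hx
    refine integrable_of_bounded_r (B := 2/x^2) ?_ (ae_of_all _ fun ω => ?_)
    · exact (measurable_const.sub ((hSmeas.mul measurable_const).cos)).div measurable_const
    · rw [abs_of_nonneg (hnn' x ω), div_le_div_iff_of_pos_right (by positivity)]
      linarith [Real.neg_one_le_cos (S ω * x)]
  have hlin1 : ∫⁻ x in Ioi (0:ℝ), ENNReal.ofReal (∫ ω, (1 - Real.cos (S ω * x))/x^2 ∂μ)
      = ∫⁻ x in Ioi (0:ℝ), ∫⁻ ω, ENNReal.ofReal ((1 - Real.cos (S ω * x))/x^2) ∂μ := by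
    refine setLIntegral_congr_fun measurableSet_Ioi (fun x hx => ?_)
    rw [ofReal_integral_eq_lintegral_ofReal (hGint x hx) (ae_of_all _ (hnn' x))]
  rw [hlin1, lintegral_lintegral_swap (Measurable.aemeasurable (by
    exact hGmeas.ennreal_ofReal))]
  have hinner : ∀ ω : Ω, (∫⁻ x in Ioi (0:ℝ),
      ENNReal.ofReal ((1 - Real.cos (S ω * x))/x^2)) = ENNReal.ofReal (π * |S ω|/2) := by
    intro ω
    rw [← ofReal_integral_eq_lintegral_ofReal (integrableOn_G (S ω))
      (ae_of_all _ fun x => hnn' x ω), lemA (S ω)]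
  rw [lintegral_congr hinner,
    ← ofReal_integral_eq_lintegral_ofReal ((hSabs.const_mul π).div_const 2)
      (ae_of_all _ fun ω => by positivity),
    ENNReal.toReal_ofReal (integral_nonneg fun ω => by positivity)]
  rw [integral_div, integral_const_mul]


end CliquetAux

/-- Proposition 4.1 (cliquet option price): for i.i.d. period returns `R k > -1` and
capped rates `Z k = min c (R k) - g/n`, the expectation of the positive part of the sum
of capped rates admits the Fourier representation
`E[max{0, Σ Z_k}] = (n/2) E[Z₁] + (1/π) ∫₀^∞ (1 - Re φ_Z(x))/x² dx`, and consequently the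
cliquet option price `C₀ = K e^{-rT}(1 + g + E[max{0, Σ Z_k}])` equals
`K e^{-rT}(1 + g + (n/2) E[Z₁] + (1/π) ∫₀^∞ (1 - Re φ_Z(x))/x² dx)`. -/
theorem cliquet_option_price {Ω : Type*} [MeasurableSpace Ω]
    (μ : Measure Ω) [IsProbabilityMeasure μ]
    (n : ℕ) (hn : 1 ≤ n) (R : Fin n → Ω → ℝ)
    (hmeas : ∀ k, Measurable (R k))
    (hindep : ProbabilityTheory.iIndepFun R μ)
    (hident : ∀ k, ProbabilityTheory.IdentDistrib (R k) (R ⟨0, hn⟩) μ μ)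
    (hfloor : ∀ k, ∀ᵐ ω ∂μ, -1 < R k ω)
    (c g : ℝ) (hc : 0 ≤ c)
    (Z : Fin n → Ω → ℝ) (hZ : ∀ k ω, Z k ω = min c (R k ω) - g / n)
    (φ : ℝ → ℂ)
    (hφ : ∀ x : ℝ, φ x = (∫ ω, Complex.exp (Complex.I * (x : ℂ) * (Z ⟨0, hn⟩ ω : ℂ)) ∂μ) ^ n)
    (K r T : ℝ) (hK : 0 < K) :
    (∫ ω, max 0 (∑ k, Z k ω) ∂μ)
        = (n / 2) * (∫ ω, Z ⟨0, hn⟩ ω ∂μ) +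
          (1 / Real.pi) * ∫ x in Set.Ioi (0 : ℝ), (1 - (φ x).re) / x ^ 2 ∧
      K * Real.exp (-r * T) * (1 + g + ∫ ω, max 0 (∑ k, Z k ω) ∂μ)
        = K * Real.exp (-r * T) *
            (1 + g + (n / 2) * (∫ ω, Z ⟨0, hn⟩ ω ∂μ) +
              (1 / Real.pi) * ∫ x in Set.Ioi (0 : ℝ), (1 - (φ x).re) / x ^ 2) := by
  classical
  have hπ : (0:ℝ) < π := Real.pi_pos
  -- basic facts about Z
  have hZfun : ∀ k, Z k = (fun t : ℝ => min c t - g / n) ∘ R k :=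
    fun k => funext fun ω => hZ k ω
  have hφ0meas : Measurable (fun t : ℝ => min c t - g / n) :=
    (measurable_const.min measurable_id).sub measurable_const
  have hZmeas : ∀ k, Measurable (Z k) := fun k => by
    rw [hZfun k]; exact hφ0meas.comp (hmeas k)
  have hZindep : ProbabilityTheory.iIndepFun Z μ := by
    have := hindep.comp (fun _ => (fun t : ℝ => min c t - g / n)) (fun _ => hφ0meas)
    convert this using 1
    funext k
    exact hZfun k
  have hZident : ∀ k, ProbabilityTheory.IdentDistrib (Z k) (Z ⟨0, hn⟩) μ μ := fun k => by
    rw [hZfun k, hZfun ⟨0, hn⟩]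
    exact (hident k).comp hφ0meas
  have hn1 : (1:ℝ) ≤ (n:ℝ) := by exact_mod_cast hn
  have hZbdd : ∀ k, ∀ᵐ ω ∂μ, |Z k ω| ≤ max c 1 + |g| := by
    intro k
    filter_upwards [hfloor k] with ω hω
    rw [hZ k ω]
    have h1 : -1 ≤ min c (R k ω) := le_min (by linarith) (le_of_lt hω)
    have h2 : min c (R k ω) ≤ c := min_le_left _ _
    have h3 : |g / (n:ℝ)| ≤ |g| := by
      rw [abs_div, abs_of_nonneg (by linarith : (0:ℝ) ≤ (n:ℝ))]
      exact div_le_self (abs_nonneg g) hn1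
    calc |min c (R k ω) - g/(n:ℝ)| ≤ |min c (R k ω)| + |g/(n:ℝ)| := abs_sub _ _
      _ ≤ max c 1 + |g| := by
          refine add_le_add ?_ h3
          rw [abs_le]
          exact ⟨by linarith [le_max_right c 1], le_trans h2 (le_max_left c 1)⟩
  have hZint : ∀ k, Integrable (Z k) μ :=
    fun k => integrable_of_bounded_r (hZmeas k) (hZbdd k)
  have hSmeas : Measurable (fun ω => ∑ k, Z k ω) :=
    Finset.measurable_sum _ (fun k _ => hZmeas k)
  have hSint : Integrable (fun ω => ∑ k, Z k ω) μ :=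
    integrable_finset_sum _ (fun k _ => hZint k)
  have hSabs : Integrable (fun ω => |∑ k, Z k ω|) μ := hSint.abs
  -- expectation of the sum
  have hES : ∫ ω, (∑ k, Z k ω) ∂μ = n * ∫ ω, Z ⟨0, hn⟩ ω ∂μ := by
    rw [integral_finset_sum _ (fun k _ => hZint k)]
    rw [Finset.sum_congr rfl (fun k _ => (hZident k).integral_eq)]
    rw [Finset.sum_const, Finset.card_univ, Fintype.card_fin, nsmul_eq_mul]
  -- the characteristic function
  have hemeas : ∀ x : ℝ, Measurable (fun t : ℝ => Complex.exp (Complex.I * x * t)) := by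
    intro x
    fun_prop
  have henorm : ∀ (x t : ℝ), ‖Complex.exp (Complex.I * x * t)‖ = 1 := by
    intro x t
    rw [Complex.norm_exp]
    norm_num [Complex.mul_re]
  have hphiS : ∀ x : ℝ,
      φ x = ∫ ω, Complex.exp (Complex.I * x * ((∑ k, Z k ω : ℝ) : ℂ)) ∂μ := by
    intro x
    have hfind : ProbabilityTheory.iIndepFun
        (fun k (ω : Ω) => Complex.exp (Complex.I * x * (Z k ω : ℂ))) μ := by
      have := hZindep.comp (fun _ => (fun t : ℝ => Complex.exp (Complex.I * x * t)))
        (fun _ => hemeas x)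
      convert this using 1
      rfl
    have hprod := integral_finset_prod_complex hfind
      (fun k => (hemeas x).comp (hZmeas k)) (fun k ω => le_of_eq (henorm x _)) Finset.univ
    have hident' : ∀ k, (∫ ω, Complex.exp (Complex.I * x * (Z k ω : ℂ)) ∂μ)
        = ∫ ω, Complex.exp (Complex.I * x * (Z ⟨0, hn⟩ ω : ℂ)) ∂μ := fun k =>
      ((hZident k).comp (hemeas x)).integral_eq
    rw [hφ x]
    calc (∫ ω, Complex.exp (Complex.I * x * (Z ⟨0, hn⟩ ω : ℂ)) ∂μ) ^ n
        = ∏ k : Fin n, ∫ ω, Complex.exp (Complex.I * x * (Z k ω : ℂ)) ∂μ := by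
          rw [Finset.prod_congr rfl (fun k _ => hident' k), Finset.prod_const,
            Finset.card_univ, Fintype.card_fin]
      _ = ∫ ω, ∏ k, Complex.exp (Complex.I * x * (Z k ω : ℂ)) ∂μ := hprod.symm
      _ = ∫ ω, Complex.exp (Complex.I * x * ((∑ k, Z k ω : ℝ) : ℂ)) ∂μ := by
          congr 1
          funext ω
          rw [← Complex.exp_sum]
          congr 1
          push_cast
          rw [Finset.mul_sum]
  have hre : ∀ x : ℝ, (φ x).re = ∫ ω, Real.cos ((∑ k, Z k ω) * x) ∂μ := by
    intro x
    rw [hphiS x]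
    have hint : Integrable (fun ω => Complex.exp (Complex.I * x * ((∑ k, Z k ω : ℝ) : ℂ))) μ :=
      integrable_of_bounded_c ((hemeas x).comp hSmeas) (fun ω => le_of_eq (henorm x _))
    have h0 := integral_re hint
    simp only [RCLike.re_to_complex] at h0
    rw [← h0]
    congr 1
    funext ω
    rw [Complex.exp_re]
    norm_num [Complex.mul_re, Complex.mul_im]
    rw [mul_comm]
  -- the Fourier identity
  have hA : ∫ x in Ioi (0:ℝ), (1 - (φ x).re)/x^2
      = π * (∫ ω, |∑ k, Z k ω| ∂μ)/2 :=
    main_tonelli μ _ hSmeas hSabs φ hre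
  -- positive part identity
  have hmaxint : ∫ ω, max 0 (∑ k, Z k ω) ∂μ
      = ((∫ ω, (∑ k, Z k ω) ∂μ) + ∫ ω, |∑ k, Z k ω| ∂μ)/2 := by
    have hmax : ∀ ω : Ω, max 0 (∑ k, Z k ω) = ((∑ k, Z k ω) + |∑ k, Z k ω|)/2 := by
      intro ω
      rcases le_total (∑ k, Z k ω) 0 with h | h
      · rw [abs_of_nonpos h, max_eq_left h]; ring
      · rw [abs_of_nonneg h, max_eq_right h]; ring
    rw [integral_congr_ae (ae_of_all _ hmax), integral_div, integral_add hSint hSabs]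
  have goal1 : (∫ ω, max 0 (∑ k, Z k ω) ∂μ)
      = (n / 2) * (∫ ω, Z ⟨0, hn⟩ ω ∂μ) +
        (1 / Real.pi) * ∫ x in Set.Ioi (0 : ℝ), (1 - (φ x).re) / x ^ 2 := by
    rw [hmaxint, hES, hA]
    field_simp
  exact ⟨goal1, by rw [goal1]; ring⟩
end

section
/- (Corollary 4.1: first moment of the capped period return via the log-return density.) Let α > 0, β ∈ (−π, π), d > 0, m ∈ ℝ, and let Y be a real random variable with Meixner density f(·; α, β, d, m). Let c ≥ 0, g ∈ ℝ, n ≥ 1 and set Z := min(c, e^{Y} − 1) − g/n. Then E[Z] = c − g/n + ∫_{−∞}^{ln(1+c)} ( e^{u} − 1 − c ) · f(u; α, β, d, m) du. -/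
open MeasureTheory Real Set

lemma meixnerDensity_nonneg (α β d m : ℝ) (hα : 0 < α)
    (hβ : β ∈ Set.Ioo (-Real.pi) Real.pi) (hd : 0 < d) (x : ℝ) :
    0 ≤ meixnerDensity α β d m x := by
  unfold meixnerDensity
  have hcos : 0 < Real.cos (β / 2) := by
    apply Real.cos_pos_of_mem_Ioo
    constructor
    · linarith [hβ.1]
    · linarith [hβ.2]
  have h1 : 0 < (2 * Real.cos (β / 2)) ^ (2 * d) := Real.rpow_pos_of_pos (by linarith) _
  have h2 : 0 < 2 * Real.pi * α * Real.Gamma (2 * d) :=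
    mul_pos (mul_pos (by positivity) hα) (Real.Gamma_pos_of_pos (by linarith))
  exact mul_nonneg (mul_nonneg (le_of_lt (div_pos h1 h2)) (Real.exp_pos _).le) (sq_nonneg _)

lemma meixnerDensity_continuous (α β d m : ℝ) (hd : 0 < d) :
    Continuous (meixnerDensity α β d m) := by
  unfold meixnerDensity
  apply Continuous.mul
  · exact continuous_const.mul (Real.continuous_exp.comp (by continuity))
  · apply Continuous.pow
    apply continuous_norm.comp
    rw [continuous_iff_continuousAt]
    intro x
    have hcont : Continuous fun x : ℝ =>
        (d : ℂ) + Complex.I * (((x - m) / α : ℝ) : ℂ) := by continuity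
    apply ContinuousAt.comp _ hcont.continuousAt
    apply (Complex.differentiableAt_Gamma _ ?_).continuousAt
    intro k hk
    have := congrArg Complex.re hk
    simp [Complex.add_re, Complex.mul_re] at this
    have hk0 : (0:ℝ) ≤ (k:ℝ) := Nat.cast_nonneg k
    linarith

/-- Corollary 4.1: first moment of the capped period return `Z = min(c, e^Y - 1) - g/n`
via the Meixner log-return density. -/
theorem mean_capped_return_via_log_density (α β d m : ℝ) (hα : 0 < α)
    (hβ : β ∈ Set.Ioo (-Real.pi) Real.pi) (hd : 0 < d)
    {Ω : Type*} [MeasurableSpace Ω] (μ : Measure Ω) [IsProbabilityMeasure μ]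
    (Y : Ω → ℝ) (hY : Measurable Y)
    (hdens : μ.map Y = volume.withDensity (fun x => ENNReal.ofReal (meixnerDensity α β d m x)))
    (c g : ℝ) (hc : 0 ≤ c) (n : ℕ) (hn : 1 ≤ n)
    (Z : Ω → ℝ) (hZ : ∀ ω, Z ω = min c (Real.exp (Y ω) - 1) - g / n) :
    (∫ ω, Z ω ∂μ)
      = c - g / n + ∫ u in Set.Iic (Real.log (1 + c)),
          (Real.exp u - 1 - c) * meixnerDensity α β d m u := by
  set f := meixnerDensity α β d m with hfdef
  have hfc : Continuous f := meixnerDensity_continuous α β d m hd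
  have hfm : Measurable f := hfc.measurable
  have hf0 : ∀ x, 0 ≤ f x := meixnerDensity_nonneg α β d m hα hβ hd
  set L := Real.log (1 + c) with hLdef
  have h1c : (0:ℝ) < 1 + c := by linarith
  have hprob : IsProbabilityMeasure (μ.map Y) := Measure.isProbabilityMeasure_map hY.aemeasurable
  -- total mass one
  have hmass : ∫⁻ x, ENNReal.ofReal (f x) = 1 := by
    have h := congrArg (fun ν : Measure ℝ => ν Set.univ) hdens
    simp only [measure_univ] at h
    rw [withDensity_apply _ MeasurableSet.univ, setLIntegral_univ] at h
    exact h.symm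
  have hfi : Integrable f := by
    refine ⟨hfc.aestronglyMeasurable, ?_⟩
    rw [hasFiniteIntegral_iff_ofReal (Filter.Eventually.of_forall hf0), hmass]
    exact ENNReal.one_lt_top
  have hfint : ∫ x, f x = 1 := by
    rw [integral_eq_lintegral_of_nonneg_ae (Filter.Eventually.of_forall hf0)
      hfc.aestronglyMeasurable, hmass]
    simp
  -- step 1 : subtract the constant
  have hintmin : Integrable (fun ω => min c (Real.exp (Y ω) - 1)) μ := by
    apply (integrable_const (max c 1)).mono'
    · exact (measurable_const.min
        ((Real.measurable_exp.comp hY).sub measurable_const)).aestronglyMeasurable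
    · refine Filter.Eventually.of_forall fun ω => ?_
      rw [Real.norm_eq_abs, abs_le]
      constructor
      · refine le_min (by nlinarith [le_max_left c 1]) ?_
        have := Real.exp_pos (Y ω)
        nlinarith [le_max_right c 1]
      · exact le_trans (min_le_left _ _) (le_max_left _ _)
  have hstep1 : ∫ ω, Z ω ∂μ = (∫ ω, min c (Real.exp (Y ω) - 1) ∂μ) - g / n := by
    simp_rw [hZ]
    rw [integral_sub hintmin (integrable_const _), integral_const]
    simp
  -- step 2 : change of variables
  have hg : Measurable fun u : ℝ => min c (Real.exp u - 1) :=
    measurable_const.min (Real.measurable_exp.sub measurable_const)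
  have hstep2 : (∫ ω, min c (Real.exp (Y ω) - 1) ∂μ)
      = ∫ u, f u * min c (Real.exp u - 1) := by
    rw [← integral_map hY.aemeasurable hg.aestronglyMeasurable, hdens]
    have heq : (fun x => ENNReal.ofReal (f x)) = fun x => ((f x).toNNReal : ENNReal) := rfl
    rw [heq, integral_withDensity_eq_integral_smul (show Measurable fun x => (f x).toNNReal from measurable_real_toNNReal.comp hfm)]
    congr 1
    ext u
    simp [NNReal.smul_def, Real.coe_toNNReal _ (hf0 u)]
  -- step 3 : decompose the integrand
  have hdecomp : ∀ u, f u * min c (Real.exp u - 1)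
      = c * f u + Set.indicator (Set.Iic L) (fun u => (Real.exp u - 1 - c) * f u) u := by
    intro u
    by_cases hu : u ∈ Set.Iic L
    · have hle : Real.exp u ≤ 1 + c := by
        calc Real.exp u ≤ Real.exp L := Real.exp_le_exp.mpr hu
        _ = 1 + c := Real.exp_log h1c
      rw [Set.indicator_of_mem hu, min_eq_right (by linarith)]
      ring
    · have hgt : 1 + c < Real.exp u := by
        have h := Real.exp_lt_exp.mpr (lt_of_not_ge hu)
        rwa [Real.exp_log h1c] at h
      rw [Set.indicator_of_notMem hu, min_eq_left (by linarith)]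
      ring
  have hind : Integrable (Set.indicator (Set.Iic L) fun u => (Real.exp u - 1 - c) * f u) := by
    apply (hfi.const_mul (1 + c)).mono'
    · exact ((((Real.measurable_exp.sub measurable_const).sub measurable_const).mul
        hfm).indicator measurableSet_Iic).aestronglyMeasurable
    · refine Filter.Eventually.of_forall fun u => ?_
      by_cases hu : u ∈ Set.Iic L
      · rw [Set.indicator_of_mem hu]
        have hle : Real.exp u ≤ 1 + c := by
          calc Real.exp u ≤ Real.exp L := Real.exp_le_exp.mpr hu
          _ = 1 + c := Real.exp_log h1c
        have hex : (0:ℝ) < Real.exp u := Real.exp_pos u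
        rw [Real.norm_eq_abs, abs_mul, abs_of_nonneg (hf0 u)]
        have : |Real.exp u - 1 - c| ≤ 1 + c := by
          rw [abs_le]; constructor <;> linarith
        nlinarith [hf0 u]
      · rw [Set.indicator_of_notMem hu]
        simp only [norm_zero]
        exact mul_nonneg (by linarith) (hf0 u)
  have hstep3 : ∫ u, f u * min c (Real.exp u - 1)
      = c + ∫ u in Set.Iic L, (Real.exp u - 1 - c) * f u := by
    simp_rw [hdecomp]
    rw [integral_add (hfi.const_mul c) hind, integral_const_mul, hfint,
      integral_indicator measurableSet_Iic]
    ring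
  rw [hstep1, hstep2, hstep3]
  ring
end
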